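/- arXiv:2601.13756 — 3 statements merged into one kernel-verified Lean document; each statement's English description precedes it below -/
import Mathlib

section
/- Let n ∈ ℕ with n ≥ 1, let λ̄ be a minimizer of σ(B(·)) over Λ_n with σ̄ = σ(B(λ̄)), let v̄ be a Perron vector of B(λ̄), and set ā_i := (v̄_i/v̄_1)^{2/3} for i = 1,…,n+2. If n = 4k or n = 4k+1 for some k ∈ ℕ, then ā_1 < ā_3 < ā_5 < … < ā_{2k+1} and ā_2 < ā_4 < ā_6 < … < ā_{2k+2}. If n = 4k+2 or n = 4k+3 for some k ∈ ℕ, then ā_1 < ā_3 < ā_5 < … < ā_{2k+3} and ā_2 < ā_4 < ā_6 < … < ā_{2k+2}. -/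
open Real

/-- The `(n+2) × (n+2)` symmetric tridiagonal matrix `B(λ)` with zero diagonal and
entries `λ_{j}^{-1/2}` on the sub/super-diagonals (0-based indexing: the entry in
positions `(i, i+1)` and `(i+1, i)` is `(l i)^{-1/2}` for `i = 0, …, n`). -/
noncomputable def Bmat (n : ℕ) (l : Fin (n+1) → ℝ) :
    Matrix (Fin (n+2)) (Fin (n+2)) ℝ :=
  Matrix.of fun i j =>
    if h1 : (i : ℕ) + 1 = (j : ℕ) then
      l ⟨(i : ℕ), by have := j.isLt; omega⟩ ^ (-(1/2) : ℝ)
    else if h2 : (j : ℕ) + 1 = (i : ℕ) then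
      l ⟨(j : ℕ), by have := i.isLt; omega⟩ ^ (-(1/2) : ℝ)
    else 0

/-- The largest eigenvalue (Perron root) of `B(λ)`. -/
noncomputable def sigmaB (n : ℕ) (l : Fin (n+1) → ℝ) : ℝ :=
  sSup {μ : ℝ | ∃ v : Fin (n+2) → ℝ, v ≠ 0 ∧ (Bmat n l).mulVec v = μ • v}

/-- The feasible set `Λ_n`: all entries positive and `(1/(n+1)) ∑ λ_i ≤ 1`. -/
def Feasible (n : ℕ) (l : Fin (n+1) → ℝ) : Prop :=
  (∀ i, 0 < l i) ∧ (∑ i, l i) / ((n : ℝ) + 1) ≤ 1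

/-- `λ̄` is a minimizer of `σ(B(·))` over `Λ_n`. -/
def IsMinimizer (n : ℕ) (l : Fin (n+1) → ℝ) : Prop :=
  Feasible n l ∧ ∀ m : Fin (n+1) → ℝ, Feasible n m → sigmaB n l ≤ sigmaB n m

/-- A Perron vector of `B(λ)`: positive entries, Euclidean norm one,
eigenvector for the Perron root. -/
def IsPerronVector (n : ℕ) (l : Fin (n+1) → ℝ) (v : Fin (n+2) → ℝ) : Prop :=
  (∀ i, 0 < v i) ∧ (∑ i, v i ^ 2) = 1 ∧ (Bmat n l).mulVec v = sigmaB n l • v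

set_option maxHeartbeats 1600000

namespace S8

lemma sum_ite_fin {N : ℕ} (k : ℕ) (f : Fin N → ℝ) :
    (∑ s : Fin N, if (s:ℕ) = k then f s else 0) =
    if h : k < N then f ⟨k, h⟩ else 0 := by
  split_ifs with h
  · rw [Finset.sum_eq_single (⟨k, h⟩ : Fin N)]
    · simp
    · intro s _ hs
      rw [if_neg]
      intro hc; exact hs (Fin.ext hc)
    · intro hc; exact absurd (Finset.mem_univ _) hc
  · apply Finset.sum_eq_zero; intro s _
    rw [if_neg]; intro hc; omega


lemma Bmat_mulVec {n : ℕ} (l' : Fin (n+1) → ℝ) (x : Fin (n+2) → ℝ) (r : Fin (n+2)) :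
    (Bmat n l').mulVec x r =
      (if h : 1 ≤ (r:ℕ) then
        l' ⟨(r:ℕ)-1, by have := r.isLt; omega⟩ ^ (-(1/2):ℝ) * x ⟨(r:ℕ)-1, by have := r.isLt; omega⟩
       else 0)
      + (if h : (r:ℕ) < n+1 then
        l' ⟨(r:ℕ), h⟩ ^ (-(1/2):ℝ) * x ⟨(r:ℕ)+1, by omega⟩
       else 0) := by
  set A : ℝ := (if h : 1 ≤ (r:ℕ) then
        l' ⟨(r:ℕ)-1, by have := r.isLt; omega⟩ ^ (-(1/2):ℝ) * x ⟨(r:ℕ)-1, by have := r.isLt; omega⟩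
       else 0) with hA
  set C : ℝ := (if h : (r:ℕ) < n+1 then
        l' ⟨(r:ℕ), h⟩ ^ (-(1/2):ℝ) * x ⟨(r:ℕ)+1, by omega⟩
       else 0) with hC
  have key : ∀ s : Fin (n+2), Bmat n l' r s * x s =
      (if (s:ℕ) = (r:ℕ)-1 ∧ 1 ≤ (r:ℕ) then A else 0)
      + (if (s:ℕ) = (r:ℕ)+1 then C else 0) := by
    intro s
    unfold Bmat
    simp only [Matrix.of_apply]
    by_cases h1 : (r:ℕ) + 1 = (s:ℕ)
    · rw [dif_pos h1]
      have hrn : (r:ℕ) < n+1 := by have := s.isLt; omega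
      rw [if_neg (show ¬((s:ℕ) = (r:ℕ)-1 ∧ 1 ≤ (r:ℕ)) by omega),
          if_pos (show (s:ℕ) = (r:ℕ)+1 by omega), hC, dif_pos hrn]
      have e1 : (⟨(r:ℕ)+1, by omega⟩ : Fin (n+2)) = s := Fin.ext (by simp; omega)
      have e2 : (⟨(r:ℕ), by have := s.isLt; omega⟩ : Fin (n+1)) = ⟨(r:ℕ), hrn⟩ := rfl
      rw [e1, e2, zero_add]
    · rw [dif_neg h1]
      by_cases h2 : (s:ℕ) + 1 = (r:ℕ)
      · rw [dif_pos h2]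
        have hr1 : 1 ≤ (r:ℕ) := by omega
        rw [if_pos (show (s:ℕ) = (r:ℕ)-1 ∧ 1 ≤ (r:ℕ) by omega),
            if_neg (show ¬((s:ℕ) = (r:ℕ)+1) by omega), hA, dif_pos hr1]
        have e1 : (⟨(r:ℕ)-1, by have := r.isLt; omega⟩ : Fin (n+2)) = s := Fin.ext (by simp; omega)
        have e2 : (⟨(r:ℕ)-1, by have := r.isLt; omega⟩ : Fin (n+1)) = ⟨(s:ℕ), by have := r.isLt; omega⟩ := Fin.ext (by simp; omega)
        rw [e1, e2, add_zero]
      · rw [dif_neg h2,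
            if_neg (show ¬((s:ℕ) = (r:ℕ)-1 ∧ 1 ≤ (r:ℕ)) by omega),
            if_neg (show ¬((s:ℕ) = (r:ℕ)+1) by omega), zero_mul, add_zero]
  unfold Matrix.mulVec dotProduct
  rw [Finset.sum_congr rfl (fun s _ => key s), Finset.sum_add_distrib]
  have S1 : (∑ s : Fin (n+2), if (s:ℕ) = (r:ℕ)-1 ∧ 1 ≤ (r:ℕ) then A else 0) = A := by
    by_cases h1 : 1 ≤ (r:ℕ)
    · have : ∀ s : Fin (n+2), (if (s:ℕ) = (r:ℕ)-1 ∧ 1 ≤ (r:ℕ) then A else 0)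
          = (if (s:ℕ) = (r:ℕ)-1 then A else 0) := fun s =>
        if_congr (and_iff_left h1) rfl rfl
      rw [Finset.sum_congr rfl (fun s _ => this s), sum_ite_fin,
          dif_pos (show (r:ℕ)-1 < n+2 by have := r.isLt; omega)]
    · rw [hA, dif_neg h1]
      apply Finset.sum_eq_zero; intro s _
      exact if_neg (fun hc => h1 hc.2)
  have S2 : (∑ s : Fin (n+2), if (s:ℕ) = (r:ℕ)+1 then C else 0) = C := by
    rw [sum_ite_fin]
    by_cases h2 : (r:ℕ) < n+1
    · rw [dif_pos (show (r:ℕ)+1 < n+2 by omega)]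
    · rw [dif_neg (show ¬((r:ℕ)+1 < n+2) by have := r.isLt; omega), hC, dif_neg h2]
  rw [S1, S2]


lemma Bmat_nonneg {n : ℕ} (l' : Fin (n+1) → ℝ) (hl' : ∀ i, 0 < l' i)
    (r s : Fin (n+2)) : 0 ≤ Bmat n l' r s := by
  unfold Bmat
  simp only [Matrix.of_apply]
  split_ifs with h1 h2
  · exact (Real.rpow_pos_of_pos (hl' _) _).le
  · exact (Real.rpow_pos_of_pos (hl' _) _).le
  · exact le_refl 0


lemma cw_bound {n : ℕ} (l' : Fin (n+1) → ℝ) (hl' : ∀ i, 0 < l' i)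
    (w : Fin (n+2) → ℝ) (hw : ∀ r, 0 < w r) (ρ : ℝ) (hρ : 0 ≤ ρ)
    (hrow : ∀ r, (Bmat n l').mulVec w r ≤ ρ * w r) : sigmaB n l' ≤ ρ := by
  apply Real.sSup_le _ hρ
  rintro μ ⟨x, hx0, hx⟩
  -- find max of |x r| / w r
  obtain ⟨r₀, -, hr₀⟩ := Finset.exists_max_image Finset.univ (fun r => |x r| / w r)
    ⟨0, Finset.mem_univ 0⟩
  set c := |x r₀| / w r₀ with hc
  have hcle : ∀ s, |x s| ≤ c * w s := by
    intro s
    have := hr₀ s (Finset.mem_univ s)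
    rw [div_le_div_iff₀ (hw s) (hw r₀)] at this
    rw [hc, div_mul_eq_mul_div, le_div_iff₀ (hw r₀)]
    linarith
  have hxr₀ : |x r₀| = c * w r₀ := by
    rw [hc, div_mul_eq_mul_div, mul_div_assoc, div_self (hw r₀).ne', mul_one]
  have hcpos : 0 < c := by
    rcases (Function.ne_iff).1 hx0 with ⟨s, hs⟩
    have h1 : 0 < |x s| := abs_pos.2 hs
    have := hcle s
    have hws := hw s
    nlinarith [hw s, hcle s]
  have hxr₀pos : 0 < |x r₀| := by rw [hxr₀]; exact mul_pos hcpos (hw r₀)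
  have key : |μ| * |x r₀| ≤ ρ * |x r₀| := by
    have h1 : (Bmat n l').mulVec x r₀ = μ * x r₀ := by
      rw [hx]; rfl
    have h2 : |μ * x r₀| ≤ c * ((Bmat n l').mulVec w r₀) := by
      rw [← h1]
      unfold Matrix.mulVec dotProduct
      calc |∑ s, Bmat n l' r₀ s * x s| ≤ ∑ s, |Bmat n l' r₀ s * x s| :=
            Finset.abs_sum_le_sum_abs _ _
        _ ≤ ∑ s, Bmat n l' r₀ s * (c * w s) := by
            apply Finset.sum_le_sum
            intro s _
            rw [abs_mul, abs_of_nonneg (Bmat_nonneg l' hl' r₀ s)]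
            exact mul_le_mul_of_nonneg_left (hcle s) (Bmat_nonneg l' hl' r₀ s)
        _ = c * ∑ s, Bmat n l' r₀ s * w s := by
            rw [Finset.mul_sum]; apply Finset.sum_congr rfl; intros; ring
    have h3 : c * ((Bmat n l').mulVec w r₀) ≤ c * (ρ * w r₀) :=
      mul_le_mul_of_nonneg_left (hrow r₀) hcpos.le
    rw [abs_mul] at h2
    calc |μ| * |x r₀| ≤ c * (ρ * w r₀) := le_trans h2 h3
      _ = ρ * (c * w r₀) := by ring
      _ = ρ * |x r₀| := by rw [hxr₀]
  have : |μ| ≤ ρ := le_of_mul_le_mul_right (by linarith [key]) hxr₀pos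
  exact le_trans (le_abs_self μ) this


lemma Bmat_symm {n : ℕ} (l' : Fin (n+1) → ℝ) (i j : Fin (n+2)) :
    Bmat n l' i j = Bmat n l' j i := by
  unfold Bmat
  simp only [Matrix.of_apply]
  by_cases h1 : (i:ℕ) + 1 = (j:ℕ)
  · rw [dif_pos h1, dif_neg (by omega), dif_pos h1]
  · by_cases h2 : (j:ℕ) + 1 = (i:ℕ)
    · rw [dif_neg h1, dif_pos h2, dif_pos h2]
    · rw [dif_neg h1, dif_neg h2, dif_neg h2, dif_neg h1]


lemma sum_mulVec_comm {n : ℕ} (l' : Fin (n+1) → ℝ) (x y : Fin (n+2) → ℝ) :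
    ∑ i, (Bmat n l').mulVec x i * y i = ∑ i, x i * (Bmat n l').mulVec y i := by
  unfold Matrix.mulVec dotProduct
  rw [Finset.sum_congr rfl (fun i _ => Finset.sum_mul (f := fun s => Bmat n l' i s * x s) Finset.univ (y i)),
     Finset.sum_comm]
  apply Finset.sum_congr rfl
  intro s _
  rw [Finset.mul_sum]
  apply Finset.sum_congr rfl
  intro i _
  rw [Bmat_symm l' i s]
  ring


section solv

variable {n : ℕ} (l : Fin (n+1) → ℝ) (σ : ℝ) (v : Fin (n+2) → ℝ)

/-- the shifted linear operator `B - σ·id` -/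
noncomputable def Top (n : ℕ) (l : Fin (n+1) → ℝ) (σ : ℝ) :
    (Fin (n+2) → ℝ) →ₗ[ℝ] (Fin (n+2) → ℝ) :=
  (Bmat n l).mulVecLin - σ • LinearMap.id

lemma Top_apply (x : Fin (n+2) → ℝ) (r : Fin (n+2)) :
    Top n l σ x r = (Bmat n l).mulVec x r - σ * x r := rfl

/-- the linear functional `x ↦ ∑ x i * v i` -/
noncomputable def phiF (n : ℕ) (v : Fin (n+2) → ℝ) : (Fin (n+2) → ℝ) →ₗ[ℝ] ℝ where
  toFun := fun x => ∑ i, x i * v i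
  map_add' := by intros x y; simp [add_mul, Finset.sum_add_distrib]
  map_smul' := by intros c x; simp [Finset.mul_sum, mul_assoc]

lemma solvable (hv2 : ∑ i, v i ^ 2 = 1) (hBv : (Bmat n l).mulVec v = σ • v)
    (hker : ∀ x : Fin (n+2) → ℝ, (Bmat n l).mulVec x = σ • x → ∃ c : ℝ, x = c • v)
    (y : Fin (n+2) → ℝ) (hy : ∑ i, y i * v i = 0) :
    ∃ z : Fin (n+2) → ℝ, ∀ r, (Bmat n l).mulVec z r - σ * z r = y r := by
  have hvne : v ≠ 0 := by
    intro h
    rw [h] at hv2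
    simp at hv2
  have hker' : LinearMap.ker (Top n l σ) = Submodule.span ℝ {v} := by
    apply le_antisymm
    · intro x hx
      rw [LinearMap.mem_ker] at hx
      have : (Bmat n l).mulVec x = σ • x := by
        funext r
        have := congrFun hx r
        rw [Top_apply] at this
        have : (Bmat n l).mulVec x r - σ * x r = 0 := this
        simpa [Pi.smul_apply, smul_eq_mul] using by linarith
      obtain ⟨c, hc⟩ := hker x this
      exact Submodule.mem_span_singleton.2 ⟨c, hc.symm⟩
    · rw [Submodule.span_le, Set.singleton_subset_iff]
      rw [SetLike.mem_coe, LinearMap.mem_ker]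
      funext r
      rw [Top_apply, hBv]
      simp
  have hrange : LinearMap.range (Top n l σ) = LinearMap.ker (phiF n v) := by
    apply Submodule.eq_of_le_of_finrank_le
    · rintro _ ⟨x, rfl⟩
      rw [LinearMap.mem_ker]
      show ∑ i, (Top n l σ x) i * v i = 0
      have : ∀ i, (Top n l σ x) i * v i = (Bmat n l).mulVec x i * v i - σ * (x i * v i) := by
        intro i; rw [Top_apply]; ring
      rw [Finset.sum_congr rfl (fun i _ => this i), Finset.sum_sub_distrib,
          sum_mulVec_comm, hBv]
      have : ∀ i, x i * (σ • v) i = σ * (x i * v i) := by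
        intro i; simp [Pi.smul_apply, smul_eq_mul]; ring
      rw [Finset.sum_congr rfl (fun i _ => this i), ← Finset.mul_sum]
      ring
    · -- finrank ker φ ≤ finrank range T
      have h1 : Module.finrank ℝ (LinearMap.range (Top n l σ)) = n + 1 := by
        have := LinearMap.finrank_range_add_finrank_ker (Top n l σ)
        rw [hker', finrank_span_singleton hvne] at this
        have h2 : Module.finrank ℝ (Fin (n+2) → ℝ) = n + 2 := by
          rw [Module.finrank_fintype_fun_eq_card, Fintype.card_fin]
        omega
      have h2 : Module.finrank ℝ (LinearMap.ker (phiF n v)) = n + 1 := by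
        have h3 : LinearMap.range (phiF n v) = ⊤ := by
          rw [LinearMap.range_eq_top]
          intro c
          refine ⟨c • v, ?_⟩
          show ∑ i, (c • v) i * v i = c
          simp only [Pi.smul_apply, smul_eq_mul, mul_assoc, ← Finset.mul_sum]
          have : ∀ i, v i * v i = v i ^ 2 := fun i => (sq (v i)).symm
          rw [Finset.sum_congr rfl (fun i _ => this i), hv2, mul_one]
        have := LinearMap.finrank_range_add_finrank_ker (phiF n v)
        rw [h3, finrank_top] at this
        have h4 : Module.finrank ℝ (Fin (n+2) → ℝ) = n + 2 := by
          rw [Module.finrank_fintype_fun_eq_card, Fintype.card_fin]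
        have h5 : Module.finrank ℝ ℝ = 1 := Module.finrank_self ℝ
        omega
      omega
  have hymem : y ∈ LinearMap.range (Top n l σ) := by
    rw [hrange, LinearMap.mem_ker]
    exact hy
  obtain ⟨z, hz⟩ := hymem
  exact ⟨z, fun r => by rw [← Top_apply]; exact congrFun hz r⟩

end solv

lemma eigvec_unique {n : ℕ} (l : Fin (n+1) → ℝ) (hl : ∀ i, 0 < l i)
    (σ : ℝ) (v : Fin (n+2) → ℝ) (hvpos : ∀ i, 0 < v i)
    (hBv : (Bmat n l).mulVec v = σ • v)
    (x : Fin (n+2) → ℝ) (hBx : (Bmat n l).mulVec x = σ • x) :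
    ∃ c : ℝ, x = c • v := by
  set c := x 0 / v 0 with hc
  have bne : ∀ i : Fin (n+1), (l i) ^ (-(1/2):ℝ) ≠ 0 :=
    fun i => (Real.rpow_pos_of_pos (hl i) _).ne'
  have main : ∀ s : ℕ, ∀ h : s < n+2, x ⟨s, h⟩ = c * v ⟨s, h⟩ := by
    intro s
    induction s using Nat.strong_induction_on with
    | _ s IH =>
      intro h
      match s, h with
      | 0, h =>
        show x 0 = c * v 0
        rw [hc, div_mul_cancel₀ _ (hvpos 0).ne']
      | (t+1), h =>
        have ht : t < n + 2 := by omega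
        have htn : t < n + 1 := by omega
        have hxr := congrFun hBx ⟨t, ht⟩
        have hvr := congrFun hBv ⟨t, ht⟩
        rw [Bmat_mulVec] at hxr hvr
        simp only [Pi.smul_apply, smul_eq_mul] at hxr hvr
        rw [dif_pos htn] at hxr hvr
        -- guard term
        by_cases h1 : 1 ≤ t
        · rw [dif_pos h1] at hxr hvr
          have e1 : x ⟨t-1, by omega⟩ = c * v ⟨t-1, by omega⟩ := IH (t-1) (by omega) (by omega)
          have e2 : x ⟨t, ht⟩ = c * v ⟨t, ht⟩ := IH t (by omega) ht
          rw [e1, e2] at hxr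
          have h2 := congrArg (fun z => c * z) hvr
          have key : l ⟨t, htn⟩ ^ (-(1/2):ℝ) * x ⟨t+1, by omega⟩
              = l ⟨t, htn⟩ ^ (-(1/2):ℝ) * (c * v ⟨t+1, by omega⟩) := by
            linarith [hxr, h2]
          exact mul_left_cancel₀ (bne _) key
        · rw [dif_neg h1] at hxr hvr
          have ht0 : t = 0 := by omega
          subst ht0
          have e2 : x ⟨0, ht⟩ = c * v ⟨0, ht⟩ := IH 0 (by omega) ht
          rw [e2] at hxr
          have h2 := congrArg (fun z => c * z) hvr
          have key : l ⟨0, htn⟩ ^ (-(1/2):ℝ) * x ⟨0+1, by omega⟩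
              = l ⟨0, htn⟩ ^ (-(1/2):ℝ) * (c * v ⟨0+1, by omega⟩) := by
            linarith [hxr, h2]
          exact mul_left_cancel₀ (bne _) key
  refine ⟨c, funext fun r => ?_⟩
  have := main r.1 r.2
  simpa [Fin.eta] using this


lemma sum_tri {n : ℕ} (b' : Fin (n+1) → ℝ) (x : Fin (n+2) → ℝ) :
    ∑ r : Fin (n+2),
      ((if h : 1 ≤ (r:ℕ) then
          b' ⟨(r:ℕ)-1, by have := r.isLt; omega⟩ * x ⟨(r:ℕ)-1, by have := r.isLt; omega⟩
        else 0)
       + (if h : (r:ℕ) < n+1 then b' ⟨(r:ℕ), h⟩ * x ⟨(r:ℕ)+1, by omega⟩ else 0)) * x r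
    = 2 * ∑ q : Fin (n+1), b' q * (x ⟨q.1, by have := q.isLt; omega⟩ * x ⟨q.1+1, by have := q.isLt; omega⟩) := by
  have split : ∀ r : Fin (n+2),
      ((if h : 1 ≤ (r:ℕ) then
          b' ⟨(r:ℕ)-1, by have := r.isLt; omega⟩ * x ⟨(r:ℕ)-1, by have := r.isLt; omega⟩
        else 0)
       + (if h : (r:ℕ) < n+1 then b' ⟨(r:ℕ), h⟩ * x ⟨(r:ℕ)+1, by omega⟩ else 0)) * x r
      = (if h : 1 ≤ (r:ℕ) then
          b' ⟨(r:ℕ)-1, by have := r.isLt; omega⟩ * x ⟨(r:ℕ)-1, by have := r.isLt; omega⟩ * x r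
        else 0)
       + (if h : (r:ℕ) < n+1 then b' ⟨(r:ℕ), h⟩ * x ⟨(r:ℕ)+1, by omega⟩ * x r else 0) := by
    intro r
    by_cases h1 : 1 ≤ (r:ℕ) <;> by_cases h2 : (r:ℕ) < n+1 <;>
      simp [dif_pos, dif_neg, h1, h2] <;> ring
  rw [Finset.sum_congr rfl (fun r _ => split r), Finset.sum_add_distrib]
  have S1 : (∑ r : Fin (n+2), if h : 1 ≤ (r:ℕ) then
          b' ⟨(r:ℕ)-1, by have := r.isLt; omega⟩ * x ⟨(r:ℕ)-1, by have := r.isLt; omega⟩ * x r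
        else 0)
      = ∑ q : Fin (n+1), b' q * (x ⟨q.1, by have := q.isLt; omega⟩ * x ⟨q.1+1, by have := q.isLt; omega⟩) := by
    rw [Fin.sum_univ_succ]
    rw [dif_neg (by simp)]
    rw [zero_add]
    apply Finset.sum_congr rfl
    intro q _
    have hv : ((q.succ : Fin (n+2)) : ℕ) = q.1 + 1 := Fin.val_succ q
    rw [dif_pos (by omega)]
    have e1 : (⟨((q.succ : Fin (n+2)):ℕ)-1, by have := (q.succ : Fin (n+2)).isLt; omega⟩ : Fin (n+1)) = q := by
      apply Fin.ext; simp [hv]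
    have e2 : (⟨((q.succ : Fin (n+2)):ℕ)-1, by have := (q.succ : Fin (n+2)).isLt; omega⟩ : Fin (n+2)) = ⟨q.1, by have := q.isLt; omega⟩ := by
      apply Fin.ext; simp [hv]
    have e3 : (q.succ : Fin (n+2)) = ⟨q.1+1, by have := q.isLt; omega⟩ := by
      apply Fin.ext; simp [hv]
    rw [e1, e2, congrArg x e3]
    ring
  have S2 : (∑ r : Fin (n+2), if h : (r:ℕ) < n+1 then
          b' ⟨(r:ℕ), h⟩ * x ⟨(r:ℕ)+1, by omega⟩ * x r else 0)
      = ∑ q : Fin (n+1), b' q * (x ⟨q.1, by have := q.isLt; omega⟩ * x ⟨q.1+1, by have := q.isLt; omega⟩) := by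
    rw [Fin.sum_univ_castSucc]
    rw [dif_neg (by simp), add_zero]
    apply Finset.sum_congr rfl
    intro q _
    have hv : ((q.castSucc : Fin (n+2)) : ℕ) = q.1 := Fin.coe_castSucc q
    rw [dif_pos (by omega)]
    have e1 : (⟨((q.castSucc : Fin (n+2)):ℕ), by omega⟩ : Fin (n+1)) = q := by
      apply Fin.ext; simp [hv]
    have e2 : (⟨((q.castSucc : Fin (n+2)):ℕ)+1, by have := (q.castSucc : Fin (n+2)).isLt; omega⟩ : Fin (n+2)) = ⟨q.1+1, by have := q.isLt; omega⟩ := by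
      apply Fin.ext; simp [hv]
    have e3 : (q.castSucc : Fin (n+2)) = ⟨q.1, by have := q.isLt; omega⟩ := by
      apply Fin.ext; simp [hv]
    rw [e1, e2, congrArg x e3]
    ring
  rw [S1, S2]
  ring

lemma hd_aff (a b : ℝ) : HasDerivAt (fun t : ℝ => a + t * b) b 0 := by
  simpa using ((hasDerivAt_id (0:ℝ)).mul_const b).const_add a


lemma hd_term {lq : ℝ} (dq vs zs : ℝ) (hlq : 0 < lq) :
    HasDerivAt (fun t : ℝ => (lq + t * dq) ^ (-(1/2):ℝ) * (vs + t * zs))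
      ((-(1/2) * dq * lq ^ (-(3/2):ℝ)) * vs + lq ^ (-(1/2):ℝ) * zs) 0 := by
  have ha := hd_aff lq dq
  have h0 : lq + 0 * dq = lq := by ring
  have hb : HasDerivAt (fun y : ℝ => y ^ (-(1/2):ℝ))
      ((-(1/2):ℝ) * (lq + 0 * dq) ^ ((-(1/2):ℝ) - 1)) (lq + 0 * dq) :=
    Real.hasDerivAt_rpow_const (Or.inl (by rw [h0]; exact hlq.ne'))
  have hc := hb.comp (0:ℝ) ha
  have hd := hc.mul (hd_aff vs zs)
  refine HasDerivAt.congr_deriv hd ?_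
  rw [h0]
  have he : ((-(1/2):ℝ) - 1) = -(3/2) := by norm_num
  rw [he]
  simp only [Function.comp]
  ring


lemma hd_third (σ c vr zr : ℝ) :
    HasDerivAt (fun t : ℝ => (σ + c * t) * (vr + t * zr)) (c * vr + σ * zr) 0 := by
  have h1 : HasDerivAt (fun t : ℝ => σ + c * t) c 0 := by
    simpa [mul_comm] using hd_aff σ c
  have h2 := h1.mul (hd_aff vr zr)
  refine HasDerivAt.congr_deriv h2 ?_
  ring


lemma ev_neg {F : ℝ → ℝ} {D : ℝ} (hF0 : F 0 = 0) (hD : D < 0)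
    (h : HasDerivAt F D 0) : ∀ᶠ t in nhdsWithin 0 (Set.Ioi 0), F t < 0 := by
  have hs := hasDerivAt_iff_tendsto_slope.1 h
  have hs' : Filter.Tendsto (slope F 0) (nhdsWithin 0 (Set.Ioi 0)) (nhds D) :=
    hs.mono_left (nhdsWithin_mono 0 (fun t ht => by
      simp only [Set.mem_compl_iff, Set.mem_singleton_iff]
      exact ne_of_gt ht))
  have hev : ∀ᶠ t in nhdsWithin 0 (Set.Ioi 0), slope F 0 t < 0 :=
    hs'.eventually_lt_const hD
  have hpos : ∀ᶠ t in nhdsWithin 0 (Set.Ioi 0), (0:ℝ) < t :=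
    eventually_nhdsWithin_of_forall (fun t ht => ht)
  filter_upwards [hev, hpos] with t h1 h2
  rw [slope_def_field, hF0, sub_zero, sub_zero, div_neg_iff] at h1
  rcases h1 with ⟨-, h1⟩ | ⟨h1, -⟩
  · linarith
  · exact h1

lemma comb {N : ℕ} (U : ℕ → ℝ) (K : ℝ)
    (hpos : ∀ s, 1 ≤ s → s ≤ N+1 → 0 < U s)
    (hU0 : U 0 = 0)
    (hrec : ∀ s, 1 ≤ s → s ≤ N → U (s+1) + U (s-1) = K * U s ^ 2)
    (j : ℕ) (hj : 2*j+3 ≤ N) : U (j+1) < U (j+3) := by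
  by_contra hcon
  push_neg at hcon   -- hcon : U (j+3) ≤ U (j+1)
  have hKpos : 0 < K := by
    have h := hrec 1 le_rfl (by omega)
    have h1 := hpos 1 le_rfl (by omega)
    have h2 := hpos 2 (by omega) (by omega)
    rw [hU0] at h
    nlinarith
  have Q : ∀ i, i ≤ j →
      U (j+3+i) ≤ U (j+1-i) ∧ U (j+1-i) * U (j+4+i) ≤ U (j-i) * U (j+3+i) := by
    intro i
    induction i with
    | zero =>
      intro _
      constructor
      · simpa using hcon
      · -- U (j+1) * U (j+4) ≤ U j * U (j+3)
        have r1 := hrec (j+3) (by omega) (by omega)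
        have r2 := hrec (j+1) (by omega) (by omega)
        have e1 : j+3+1 = j+4 := by omega
        have e2 : j+3-1 = j+2 := by omega
        have e3 : j+1+1 = j+2 := by omega
        have e4 : j+1-1 = j := by omega
        rw [e1, e2] at r1
        rw [e3, e4] at r2
        have p1 := hpos (j+1) (by omega) (by omega)
        have p2 := hpos (j+2) (by omega) (by omega)
        have p3 := hpos (j+3) (by omega) (by omega)
        simp only [Nat.add_zero, Nat.sub_zero]
        have key : U (j+1) * U (j+4) - U j * U (j+3)
            = (U (j+3) - U (j+1)) * (K * (U (j+1) * U (j+3)) + U (j+2)) := by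
          linear_combination U (j+1) * r1 - U (j+3) * r2
        have hfac : 0 < K * (U (j+1) * U (j+3)) + U (j+2) :=
          add_pos (mul_pos hKpos (mul_pos p1 p3)) p2
        have hprod : (U (j+3) - U (j+1)) * (K * (U (j+1) * U (j+3)) + U (j+2)) ≤ 0 :=
          mul_nonpos_of_nonpos_of_nonneg (by linarith) hfac.le
        linarith
    | succ i IH =>
      intro hi
      obtain ⟨hA, hC⟩ := IH (by omega)
      have pA : 0 < U (j+1-i) := hpos _ (by omega) (by omega)
      have pB : 0 < U (j+3+i) := hpos _ (by omega) (by omega)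
      have pD : 0 < U (j+4+i) := hpos _ (by omega) (by omega)
      have pJI : 0 < U (j-i) := hpos _ (by omega) (by omega)
      -- first component : U (j+4+i) ≤ U (j-i)
      have hfirst : U (j+4+i) ≤ U (j-i) := by
        nlinarith [hC, mul_le_mul_of_nonneg_left hA pJI.le, pA]
      have e5 : j+1-(i+1) = j-i := by omega
      have e6 : j+3+(i+1) = j+4+i := by omega
      have e7 : j+4+(i+1) = j+5+i := by omega
      have e8 : j-(i+1) = j-i-1 := by omega
      rw [e5, e6, e7, e8]
      refine ⟨hfirst, ?_⟩
      -- second component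
      have r1 := hrec (j+4+i) (by omega) (by omega)
      have r2 := hrec (j-i) (by omega) (by omega)
      have e9 : j+4+i+1 = j+5+i := by omega
      have e10 : j+4+i-1 = j+3+i := by omega
      have e11 : j-i+1 = j+1-i := by omega
      rw [e9, e10] at r1
      rw [e11] at r2
      have key : U (j-i) * U (j+5+i) - U (j-i-1) * U (j+4+i)
          = (K * (U (j-i) * U (j+4+i))) * (U (j+4+i) - U (j-i))
            - (U (j-i) * U (j+3+i) - U (j+1-i) * U (j+4+i)) := by
        linear_combination U (j-i) * r1 - U (j+4+i) * r2
      have h1 : (K * (U (j-i) * U (j+4+i))) * (U (j+4+i) - U (j-i)) ≤ 0 :=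
        mul_nonpos_of_nonneg_of_nonpos (mul_pos hKpos (mul_pos pJI pD)).le
          (by linarith)
      linarith
  obtain ⟨-, hQj⟩ := Q j le_rfl
  have e12 : j+1-j = 1 := by omega
  have e13 : j-j = 0 := by omega
  rw [e12, e13, hU0, zero_mul] at hQj
  have p1 := hpos 1 le_rfl (by omega)
  have p2 := hpos (j+4+j) (by omega) (by omega)
  nlinarith


lemma cube_id {b x y c : ℝ} (hb : 0 < b) (hx : 0 < x) (hy : 0 < y)
    (hbc : b^3 * (x * y) = c) :
    b * y * (x ^ (1/3:ℝ) * c ^ (-1/3:ℝ)) = y ^ (2/3:ℝ) := by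
  have hcinv : c ^ (-1/3:ℝ) = b⁻¹ * (x ^ (-1/3:ℝ) * y ^ (-1/3:ℝ)) := by
    rw [← hbc, Real.mul_rpow (by positivity) (by positivity),
        Real.mul_rpow hx.le hy.le, ← Real.rpow_natCast b 3, ← Real.rpow_mul hb.le]
    rw [show ((3:ℕ):ℝ) * (-1/3) = -1 by norm_num, Real.rpow_neg_one]
  rw [hcinv]
  have h1 : x ^ (1/3:ℝ) * x ^ (-1/3:ℝ) = 1 := by
    rw [← Real.rpow_add hx]; norm_num
  have h2 : y * y ^ (-1/3:ℝ) = y ^ (2/3:ℝ) := by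
    nth_rewrite 1 [← Real.rpow_one y]
    rw [← Real.rpow_add hy]; norm_num
  calc b * y * (x ^ (1/3:ℝ) * (b⁻¹ * (x ^ (-1/3:ℝ) * y ^ (-1/3:ℝ))))
      = (b * b⁻¹) * (x ^ (1/3:ℝ) * x ^ (-1/3:ℝ)) * (y * y ^ (-1/3:ℝ)) := by ring
    _ = y ^ (2/3:ℝ) := by rw [mul_inv_cancel₀ hb.ne', h1, h2]; ring


lemma x_pow_rhs {x : ℝ} (hx : 0 < x) : x * x ^ (1/3:ℝ) = (x ^ (2/3:ℝ))^2 := by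
  have h1 : x * x ^ (1/3:ℝ) = x ^ (4/3:ℝ) := by
    nth_rewrite 1 [← Real.rpow_one x]
    rw [← Real.rpow_add hx]; norm_num
  have h2 : (x ^ (2/3:ℝ))^2 = x ^ (4/3:ℝ) := by
    rw [sq, ← Real.rpow_add hx]; norm_num
  rw [h1, h2]


lemma b_cubed {lq : ℝ} (hlq : 0 < lq) :
    (lq ^ (-(1/2):ℝ))^3 = lq ^ (-(3/2):ℝ) := by
  rw [← Real.rpow_natCast (lq ^ (-(1/2):ℝ)) 3, ← Real.rpow_mul hlq.le]
  norm_num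


lemma G_noStrict {n : ℕ} (hn : 1 ≤ n) (l : Fin (n+1) → ℝ) (hmin : IsMinimizer n l)
    (v : Fin (n+2) → ℝ) (hv : IsPerronVector n l v) (i j : Fin (n+1)) :
    ¬ ((l j) ^ (-(3/2):ℝ) * (v ⟨j.1, by have := j.isLt; omega⟩ * v ⟨j.1+1, by have := j.isLt; omega⟩)
      < (l i) ^ (-(3/2):ℝ) * (v ⟨i.1, by have := i.isLt; omega⟩ * v ⟨i.1+1, by have := i.isLt; omega⟩)) := by
  intro hcon
  obtain ⟨⟨hl, hsum⟩, hopt⟩ := hmin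
  obtain ⟨hvpos, hv2, hBv⟩ := hv
  set σ := sigmaB n l with hσdef
  have hij : i ≠ j := fun h => by rw [h] at hcon; exact lt_irrefl _ hcon
  -- positivity of σ
  have hσpos : 0 < σ := by
    have h0 := congrFun hBv ⟨0, by omega⟩
    rw [Bmat_mulVec] at h0
    rw [dif_neg (by simp), dif_pos (by simp)] at h0
    simp only [Pi.smul_apply, smul_eq_mul, zero_add] at h0
    have hb := Real.rpow_pos_of_pos (hl ⟨0, by omega⟩) (-(1/2):ℝ)
    nlinarith [hvpos ⟨0, by omega⟩, hvpos ⟨0+1, by omega⟩, h0]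
  -- perturbation direction
  set d : Fin (n+1) → ℝ := fun r => if r = i then 1 else if r = j then -1 else 0 with hd
  set β : Fin (n+1) → ℝ := fun r => -(1/2) * d r * (l r) ^ (-(3/2):ℝ) with hβ
  set δ : ℝ := (l j) ^ (-(3/2):ℝ) * (v ⟨j.1, by have := j.isLt; omega⟩ * v ⟨j.1+1, by have := j.isLt; omega⟩)
      - (l i) ^ (-(3/2):ℝ) * (v ⟨i.1, by have := i.isLt; omega⟩ * v ⟨i.1+1, by have := i.isLt; omega⟩) with hδdef
  have hδneg : δ < 0 := by rw [hδdef]; linarith [hcon]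
  set y : Fin (n+2) → ℝ := fun r => δ * v r -
      ((if h : 1 ≤ (r:ℕ) then
          β ⟨(r:ℕ)-1, by have := r.isLt; omega⟩ * v ⟨(r:ℕ)-1, by have := r.isLt; omega⟩
        else 0)
       + (if h : (r:ℕ) < n+1 then β ⟨(r:ℕ), h⟩ * v ⟨(r:ℕ)+1, by omega⟩ else 0)) with hy
  have horth : ∑ r, y r * v r = 0 := by
    have hexp : ∀ r : Fin (n+2), y r * v r = δ * (v r * v r) -
        ((if h : 1 ≤ (r:ℕ) then
            β ⟨(r:ℕ)-1, by have := r.isLt; omega⟩ * v ⟨(r:ℕ)-1, by have := r.isLt; omega⟩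
          else 0)
         + (if h : (r:ℕ) < n+1 then β ⟨(r:ℕ), h⟩ * v ⟨(r:ℕ)+1, by omega⟩ else 0)) * v r := by
      intro r; rw [hy]; ring
    rw [Finset.sum_congr rfl (fun r _ => hexp r), Finset.sum_sub_distrib, ← Finset.mul_sum,
        sum_tri β v]
    have h1 : ∑ r : Fin (n+2), v r * v r = 1 := by
      rw [← hv2]; apply Finset.sum_congr rfl; intro r _; ring
    have h2 : ∑ q : Fin (n+1), β q * (v ⟨q.1, by have := q.isLt; omega⟩ * v ⟨q.1+1, by have := q.isLt; omega⟩) = δ / 2 := by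
      have hptw : ∀ q : Fin (n+1), β q * (v ⟨q.1, by have := q.isLt; omega⟩ * v ⟨q.1+1, by have := q.isLt; omega⟩)
          = (if q = i then -(1/2) * ((l i) ^ (-(3/2):ℝ) * (v ⟨i.1, by have := i.isLt; omega⟩ * v ⟨i.1+1, by have := i.isLt; omega⟩)) else 0)
          + (if q = j then (1/2) * ((l j) ^ (-(3/2):ℝ) * (v ⟨j.1, by have := j.isLt; omega⟩ * v ⟨j.1+1, by have := j.isLt; omega⟩)) else 0) := by
        intro q
        by_cases hqi : q = i
        · subst hqi
          rw [if_pos rfl, if_neg hij, hβ]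
          simp only [hd, eq_self_iff_true, if_true]
          ring
        · rw [if_neg hqi]
          by_cases hqj : q = j
          · subst hqj
            rw [if_pos rfl, hβ]
            simp only [hd, hqi, eq_self_iff_true, if_true, if_false]
            ring
          · rw [if_neg hqj, hβ]
            simp only [hd, hqi, hqj, if_false]
            ring
      rw [Finset.sum_congr rfl (fun q _ => hptw q), Finset.sum_add_distrib,
          Finset.sum_ite_eq' Finset.univ i, Finset.sum_ite_eq' Finset.univ j]
      simp only [Finset.mem_univ, if_true]
      rw [hδdef]; ring
    rw [h1, h2]; ring
  have hker : ∀ x : Fin (n+2) → ℝ, (Bmat n l).mulVec x = σ • x → ∃ c : ℝ, x = c • v :=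
    fun x hx => eigvec_unique l hl σ v hvpos hBv x hx
  obtain ⟨z, hz⟩ := solvable l σ v hv2 hBv hker y horth

  -- row functions eventually negative for small positive t
  have hFrow : ∀ r : Fin (n+2), ∀ᶠ t in nhdsWithin (0:ℝ) (Set.Ioi 0),
      (Bmat n (fun q => l q + t * d q)).mulVec (fun s => v s + t * z s) r
        - (σ + δ/2 * t) * (v r + t * z r) < 0 := by
    intro r
    have hr2 := r.isLt
    have hzr := hz r
    rw [Bmat_mulVec] at hzr
    simp only [hy] at hzr
    have h0 := congrFun hBv r
    rw [Bmat_mulVec] at h0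
    simp only [Pi.smul_apply, smul_eq_mul] at h0
    by_cases h1 : 1 ≤ (r:ℕ)
    · by_cases h2 : (r:ℕ) < n+1
      · -- interior row
        simp only [dif_pos h1, dif_pos h2] at hzr h0
        have hda := hd_term (lq := l ⟨(r:ℕ)-1, by omega⟩) (d ⟨(r:ℕ)-1, by omega⟩)
          (v ⟨(r:ℕ)-1, by omega⟩) (z ⟨(r:ℕ)-1, by omega⟩) (hl _)
        have hdb := hd_term (lq := l ⟨(r:ℕ), h2⟩) (d ⟨(r:ℕ), h2⟩)
          (v ⟨(r:ℕ)+1, by omega⟩) (z ⟨(r:ℕ)+1, by omega⟩) (hl _)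
        have hdsum := (hda.add hdb).sub (hd_third σ (δ/2) (v r) (z r))
        have heq : ((-(1/2) * d ⟨(r:ℕ)-1, by omega⟩ * (l ⟨(r:ℕ)-1, by omega⟩) ^ (-(3/2):ℝ)) * v ⟨(r:ℕ)-1, by omega⟩
              + (l ⟨(r:ℕ)-1, by omega⟩) ^ (-(1/2):ℝ) * z ⟨(r:ℕ)-1, by omega⟩
            + ((-(1/2) * d ⟨(r:ℕ), h2⟩ * (l ⟨(r:ℕ), h2⟩) ^ (-(3/2):ℝ)) * v ⟨(r:ℕ)+1, by omega⟩
              + (l ⟨(r:ℕ), h2⟩) ^ (-(1/2):ℝ) * z ⟨(r:ℕ)+1, by omega⟩))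
            - (δ/2 * v r + σ * z r) = δ/2 * v r := by
          simp only [hβ] at hzr
          linarith [hzr]
        rw [heq] at hdsum
        have hF0 : (fun t : ℝ =>
            (l ⟨(r:ℕ)-1, by omega⟩ + t * d ⟨(r:ℕ)-1, by omega⟩) ^ (-(1/2):ℝ)
              * (v ⟨(r:ℕ)-1, by omega⟩ + t * z ⟨(r:ℕ)-1, by omega⟩)
            + (l ⟨(r:ℕ), h2⟩ + t * d ⟨(r:ℕ), h2⟩) ^ (-(1/2):ℝ)
              * (v ⟨(r:ℕ)+1, by omega⟩ + t * z ⟨(r:ℕ)+1, by omega⟩)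
            - (σ + δ/2 * t) * (v r + t * z r)) 0 = 0 := by
          simp only [zero_mul, add_zero, mul_zero]
          linarith [h0]
        have hDneg : δ/2 * v r < 0 :=
          mul_neg_of_neg_of_pos (by linarith) (hvpos r)
        have hev := ev_neg hF0 hDneg hdsum
        filter_upwards [hev] with t ht
        rw [Bmat_mulVec]
        simp only [dif_pos h1, dif_pos h2]
        exact ht
      · -- last row
        simp only [dif_pos h1, dif_neg h2] at hzr h0
        have hda := hd_term (lq := l ⟨(r:ℕ)-1, by omega⟩) (d ⟨(r:ℕ)-1, by omega⟩)
          (v ⟨(r:ℕ)-1, by omega⟩) (z ⟨(r:ℕ)-1, by omega⟩) (hl _)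
        have hdsum := hda.sub (hd_third σ (δ/2) (v r) (z r))
        have heq : ((-(1/2) * d ⟨(r:ℕ)-1, by omega⟩ * (l ⟨(r:ℕ)-1, by omega⟩) ^ (-(3/2):ℝ)) * v ⟨(r:ℕ)-1, by omega⟩
              + (l ⟨(r:ℕ)-1, by omega⟩) ^ (-(1/2):ℝ) * z ⟨(r:ℕ)-1, by omega⟩)
            - (δ/2 * v r + σ * z r) = δ/2 * v r := by
          simp only [hβ] at hzr
          linarith [hzr]
        rw [heq] at hdsum
        have hF0 : (fun t : ℝ =>
            (l ⟨(r:ℕ)-1, by omega⟩ + t * d ⟨(r:ℕ)-1, by omega⟩) ^ (-(1/2):ℝ)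
              * (v ⟨(r:ℕ)-1, by omega⟩ + t * z ⟨(r:ℕ)-1, by omega⟩)
            - (σ + δ/2 * t) * (v r + t * z r)) 0 = 0 := by
          simp only [zero_mul, add_zero, mul_zero]
          linarith [h0]
        have hDneg : δ/2 * v r < 0 :=
          mul_neg_of_neg_of_pos (by linarith) (hvpos r)
        have hev := ev_neg hF0 hDneg hdsum
        filter_upwards [hev] with t ht
        rw [Bmat_mulVec]
        simp only [dif_pos h1, dif_neg h2, add_zero]
        exact ht
    · -- first row
      have h2 : (r:ℕ) < n+1 := by omega
      simp only [dif_neg h1, dif_pos h2, zero_add] at hzr h0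
      have hdb := hd_term (lq := l ⟨(r:ℕ), h2⟩) (d ⟨(r:ℕ), h2⟩)
        (v ⟨(r:ℕ)+1, by omega⟩) (z ⟨(r:ℕ)+1, by omega⟩) (hl _)
      have hdsum := hdb.sub (hd_third σ (δ/2) (v r) (z r))
      have heq : ((-(1/2) * d ⟨(r:ℕ), h2⟩ * (l ⟨(r:ℕ), h2⟩) ^ (-(3/2):ℝ)) * v ⟨(r:ℕ)+1, by omega⟩
            + (l ⟨(r:ℕ), h2⟩) ^ (-(1/2):ℝ) * z ⟨(r:ℕ)+1, by omega⟩)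
          - (δ/2 * v r + σ * z r) = δ/2 * v r := by
        simp only [hβ] at hzr
        linarith [hzr]
      rw [heq] at hdsum
      have hF0 : (fun t : ℝ =>
          (l ⟨(r:ℕ), h2⟩ + t * d ⟨(r:ℕ), h2⟩) ^ (-(1/2):ℝ)
            * (v ⟨(r:ℕ)+1, by omega⟩ + t * z ⟨(r:ℕ)+1, by omega⟩)
          - (σ + δ/2 * t) * (v r + t * z r)) 0 = 0 := by
        simp only [zero_mul, add_zero, mul_zero]
        linarith [h0]
      have hDneg : δ/2 * v r < 0 :=
        mul_neg_of_neg_of_pos (by linarith) (hvpos r)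
      have hev := ev_neg hF0 hDneg hdsum
      filter_upwards [hev] with t ht
      rw [Bmat_mulVec]
      simp only [dif_neg h1, dif_pos h2, zero_add]
      exact ht
  -- other smallness conditions
  have hev1 : ∀ᶠ t in nhdsWithin (0:ℝ) (Set.Ioi 0), ∀ r : Fin (n+2),
      (Bmat n (fun q => l q + t * d q)).mulVec (fun s => v s + t * z s) r
        - (σ + δ/2 * t) * (v r + t * z r) < 0 := Filter.eventually_all.2 hFrow
  have hev2 : ∀ᶠ t in nhdsWithin (0:ℝ) (Set.Ioi 0), ∀ q : Fin (n+1), 0 < l q + t * d q := by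
    apply Filter.eventually_all.2
    intro q
    have hc : Filter.Tendsto (fun t : ℝ => l q + t * d q) (nhds 0) (nhds (l q + 0 * d q)) :=
      (Continuous.tendsto (continuous_const.add (continuous_id.mul continuous_const)) 0)
    have : ∀ᶠ t in nhds (0:ℝ), 0 < l q + t * d q :=
      hc.eventually_const_lt (by simpa using hl q)
    exact this.filter_mono nhdsWithin_le_nhds
  have hev3 : ∀ᶠ t in nhdsWithin (0:ℝ) (Set.Ioi 0), ∀ s : Fin (n+2), 0 < v s + t * z s := by
    apply Filter.eventually_all.2
    intro s
    have hc : Filter.Tendsto (fun t : ℝ => v s + t * z s) (nhds 0) (nhds (v s + 0 * z s)) :=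
      (Continuous.tendsto (continuous_const.add (continuous_id.mul continuous_const)) 0)
    have : ∀ᶠ t in nhds (0:ℝ), 0 < v s + t * z s :=
      hc.eventually_const_lt (by simpa using hvpos s)
    exact this.filter_mono nhdsWithin_le_nhds
  have hev4 : ∀ᶠ t in nhdsWithin (0:ℝ) (Set.Ioi 0), 0 < σ + δ/2 * t := by
    have hc : Filter.Tendsto (fun t : ℝ => σ + δ/2 * t) (nhds 0) (nhds (σ + δ/2 * 0)) :=
      (Continuous.tendsto (continuous_const.add (continuous_const.mul continuous_id)) 0)
    have : ∀ᶠ t in nhds (0:ℝ), 0 < σ + δ/2 * t :=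
      hc.eventually_const_lt (by simpa using hσpos)
    exact this.filter_mono nhdsWithin_le_nhds
  have hev5 : ∀ᶠ t in nhdsWithin (0:ℝ) (Set.Ioi 0), (0:ℝ) < t :=
    eventually_nhdsWithin_of_forall (fun t ht => ht)
  obtain ⟨t, h1, h2, h3, h4, h5⟩ :=
    (hev1.and (hev2.and (hev3.and (hev4.and hev5)))).exists
  -- the perturbed weights are feasible
  have hmfeas : Feasible n (fun q => l q + t * d q) := by
    refine ⟨h2, ?_⟩
    have hsumd : ∑ q : Fin (n+1), d q = 0 := by
      have hsplit : ∀ q : Fin (n+1), d q =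
          (if q = i then (1:ℝ) else 0) + (if q = j then (-1:ℝ) else 0) := by
        intro q
        by_cases hqi : q = i
        · subst hqi
          simp only [hd, eq_self_iff_true, if_true, if_neg hij]
          ring
        · by_cases hqj : q = j
          · subst hqj
            simp only [hd, hqi, if_false, eq_self_iff_true, if_true]
            ring
          · simp only [hd, hqi, hqj, if_false]
            ring
      rw [Finset.sum_congr rfl (fun q _ => hsplit q), Finset.sum_add_distrib,
          Finset.sum_ite_eq' Finset.univ i, Finset.sum_ite_eq' Finset.univ j]
      simp
    have hsq : ∑ q : Fin (n+1), (l q + t * d q) = ∑ q : Fin (n+1), l q := by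
      rw [Finset.sum_add_distrib, ← Finset.mul_sum, hsumd, mul_zero, add_zero]
    rw [hsq]
    exact hsum
  -- Collatz–Wielandt bound gives a contradiction with minimality
  have hcw : sigmaB n (fun q => l q + t * d q) ≤ σ + δ/2 * t := by
    apply cw_bound _ h2 _ h3 _ (le_of_lt h4)
    intro r
    linarith [h1 r]
  have hge : σ ≤ sigmaB n (fun q => l q + t * d q) := hopt _ hmfeas
  nlinarith [h5, hδneg]


end S8

open S8

/-- interlaced monotonicity of the `ā_i = (v̄_i/v̄_1)^{2/3}`
(1-based indexing) at the minimizer. -/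
theorem stmt_8 (n : ℕ) (hn : 1 ≤ n) (l : Fin (n+1) → ℝ)
    (hmin : IsMinimizer n l) (v : Fin (n+2) → ℝ) (hv : IsPerronVector n l v)
    (a : ℕ → ℝ)
    (ha : ∀ j : Fin (n+2), a ((j : ℕ) + 1) = (v j / v 0) ^ ((2:ℝ)/3)) :
    (∀ k : ℕ, (n = 4*k ∨ n = 4*k+1) →
      (∀ m, m < k → a (2*m+1) < a (2*m+3)) ∧
      (∀ m, m < k → a (2*m+2) < a (2*m+4))) ∧
    (∀ k : ℕ, (n = 4*k+2 ∨ n = 4*k+3) →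
      (∀ m, m < k+1 → a (2*m+1) < a (2*m+3)) ∧
      (∀ m, m < k → a (2*m+2) < a (2*m+4))) := by
  have hl := hmin.1.1
  have hvpos := hv.1
  have hv2 := hv.2.1
  have hBv := hv.2.2
  have vmk : ∀ (x : ℕ) (b : ℕ) (hx : x < n+2) (hb : b < n+2), x = b → v ⟨x, hx⟩ = v ⟨b, hb⟩ := by
    intro x b hx hb h; subst h; rfl
  -- positivity of the Perron root
  have hσpos : 0 < sigmaB n l := by
    have h0 := congrFun hBv ⟨0, by omega⟩
    rw [Bmat_mulVec] at h0
    rw [dif_neg (by simp), dif_pos (by simp)] at h0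
    simp only [Pi.smul_apply, smul_eq_mul, zero_add] at h0
    have hb := Real.rpow_pos_of_pos (hl ⟨0, by omega⟩) (-(1/2):ℝ)
    nlinarith [hvpos ⟨0, by omega⟩, hvpos ⟨0+1, by omega⟩, h0]
  -- the optimality identity
  have hGconst : ∀ q : Fin (n+1),
      (l q) ^ (-(3/2):ℝ) * (v ⟨q.1, by have := q.isLt; omega⟩ * v ⟨q.1+1, by have := q.isLt; omega⟩)
      = (l ⟨0, by omega⟩) ^ (-(3/2):ℝ) * (v ⟨(0:ℕ), by omega⟩ * v ⟨0+1, by omega⟩) := by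
    intro q
    have h1 := G_noStrict hn l hmin v hv q ⟨0, by omega⟩
    have h2 := G_noStrict hn l hmin v hv ⟨0, by omega⟩ q
    have h1' := not_lt.1 h1
    have h2' := not_lt.1 h2
    linarith
  set c : ℝ := (l ⟨0, by omega⟩) ^ (-(3/2):ℝ) * (v ⟨(0:ℕ), by omega⟩ * v ⟨0+1, by omega⟩) with hcdef
  have hcpos : 0 < c := by
    rw [hcdef]
    exact mul_pos (Real.rpow_pos_of_pos (hl _) _) (mul_pos (hvpos _) (hvpos _))
  set K : ℝ := sigmaB n l * c ^ (-1/3:ℝ) with hKdef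
  set U : ℕ → ℝ := fun s =>
    if h : 1 ≤ s ∧ s ≤ n+2 then (v ⟨s-1, by omega⟩) ^ ((2:ℝ)/3) else 0 with hUdef
  have hU0 : U 0 = 0 := by rw [hUdef]; simp
  have hUval : ∀ s, 1 ≤ s → ∀ h2 : s ≤ n+2, U s = (v ⟨s-1, by omega⟩) ^ ((2:ℝ)/3) := by
    intro s h1 h2
    rw [hUdef]
    simp only
    rw [dif_pos ⟨h1, h2⟩]
  have hUpos : ∀ s, 1 ≤ s → s ≤ (n+1)+1 → 0 < U s := by
    intro s h1 h2
    rw [hUval s h1 (by omega)]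
    exact Real.rpow_pos_of_pos (hvpos _) _
  -- the nonlinear recurrence
  have hrec : ∀ s, 1 ≤ s → s ≤ n+1 → U (s+1) + U (s-1) = K * U s ^ 2 := by
    intro s hs1 hs2
    have hU1 : U (s+1) = (v ⟨s, by omega⟩) ^ ((2:ℝ)/3) := by
      rw [hUval (s+1) (by omega) (by omega),
          vmk (s+1-1) s (by omega) (by omega) (by omega)]
    have hUs : U s = (v ⟨s-1, by omega⟩) ^ ((2:ℝ)/3) := hUval s hs1 (by omega)
    have h0 := congrFun hBv ⟨s-1, by omega⟩
    rw [Bmat_mulVec] at h0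
    simp only [Pi.smul_apply, smul_eq_mul] at h0
    have hx := x_pow_rhs (hvpos ⟨s-1, by omega⟩)
    by_cases hs' : 2 ≤ s
    · rw [dif_pos (show 1 ≤ ((⟨s-1, by omega⟩ : Fin (n+2)):ℕ) by simp; omega),
          dif_pos (show ((⟨s-1, by omega⟩ : Fin (n+2)):ℕ) < n+1 by simp; omega)] at h0
      have h0' : l ⟨s-2, by omega⟩ ^ (-(1/2):ℝ) * v ⟨s-2, by omega⟩
          + l ⟨s-1, by omega⟩ ^ (-(1/2):ℝ) * v ⟨s-1+1, by omega⟩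
          = sigmaB n l * v ⟨s-1, by omega⟩ := h0
      rw [vmk (s-1+1) s (by omega) (by omega) (by omega)] at h0'
      have hUsm : U (s-1) = (v ⟨s-2, by omega⟩) ^ ((2:ℝ)/3) := by
        rw [hUval (s-1) (by omega) (by omega),
            vmk (s-1-1) (s-2) (by omega) (by omega) (by omega)]
      -- optimality identities
      have hq1 : (l ⟨s-2, by omega⟩) ^ (-(3/2):ℝ) * (v ⟨s-2, by omega⟩ * v ⟨s-2+1, by omega⟩) = c :=
        hGconst ⟨s-2, by omega⟩
      rw [vmk (s-2+1) (s-1) (by omega) (by omega) (by omega)] at hq1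
      have hq2 : (l ⟨s-1, by omega⟩) ^ (-(3/2):ℝ) * (v ⟨s-1, by omega⟩ * v ⟨s-1+1, by omega⟩) = c :=
        hGconst ⟨s-1, by omega⟩
      rw [vmk (s-1+1) s (by omega) (by omega) (by omega)] at hq2
      have hbc1 : ((l ⟨s-2, by omega⟩) ^ (-(1/2):ℝ))^3 * (v ⟨s-1, by omega⟩ * v ⟨s-2, by omega⟩) = c := by
        rw [b_cubed (hl _), mul_comm (v ⟨s-1, by omega⟩) (v ⟨s-2, by omega⟩)]
        exact hq1
      have hbc2 : ((l ⟨s-1, by omega⟩) ^ (-(1/2):ℝ))^3 * (v ⟨s-1, by omega⟩ * v ⟨s, by omega⟩) = c := by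
        rw [b_cubed (hl _)]
        exact hq2
      have t1 := cube_id (Real.rpow_pos_of_pos (hl ⟨s-2, by omega⟩) _)
        (hvpos ⟨s-1, by omega⟩) (hvpos ⟨s-2, by omega⟩) hbc1
      have t2 := cube_id (Real.rpow_pos_of_pos (hl ⟨s-1, by omega⟩) _)
        (hvpos ⟨s-1, by omega⟩) (hvpos ⟨s, by omega⟩) hbc2
      rw [hU1, hUs, hUsm]
      calc (v ⟨s, by omega⟩) ^ ((2:ℝ)/3) + (v ⟨s-2, by omega⟩) ^ ((2:ℝ)/3)
          = l ⟨s-1, by omega⟩ ^ (-(1/2):ℝ) * v ⟨s, by omega⟩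
              * (v ⟨s-1, by omega⟩ ^ (1/3:ℝ) * c ^ (-1/3:ℝ))
            + l ⟨s-2, by omega⟩ ^ (-(1/2):ℝ) * v ⟨s-2, by omega⟩
              * (v ⟨s-1, by omega⟩ ^ (1/3:ℝ) * c ^ (-1/3:ℝ)) := by
            rw [t1, t2]
        _ = (l ⟨s-2, by omega⟩ ^ (-(1/2):ℝ) * v ⟨s-2, by omega⟩
            + l ⟨s-1, by omega⟩ ^ (-(1/2):ℝ) * v ⟨s, by omega⟩)
              * (v ⟨s-1, by omega⟩ ^ (1/3:ℝ) * c ^ (-1/3:ℝ)) := by ring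
        _ = (sigmaB n l * v ⟨s-1, by omega⟩)
              * (v ⟨s-1, by omega⟩ ^ (1/3:ℝ) * c ^ (-1/3:ℝ)) := by rw [h0']
        _ = K * ((v ⟨s-1, by omega⟩) ^ ((2:ℝ)/3)) ^ 2 := by
            rw [hKdef]
            linear_combination (sigmaB n l * c ^ (-1/3:ℝ)) * hx
    · have hseq : s = 1 := by omega
      subst hseq
      rw [dif_neg (by simp), dif_pos (by simp)] at h0
      have h0' : l ⟨0, by omega⟩ ^ (-(1/2):ℝ) * v ⟨0+1, by omega⟩
          = sigmaB n l * v ⟨0, by omega⟩ := by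
        have h0'' : (0:ℝ) + l ⟨0, by omega⟩ ^ (-(1/2):ℝ) * v ⟨0+1, by omega⟩
            = sigmaB n l * v ⟨0, by omega⟩ := h0
        linarith
      have hq2 : (l ⟨0, by omega⟩) ^ (-(3/2):ℝ) * (v ⟨(0:ℕ), by omega⟩ * v ⟨0+1, by omega⟩) = c :=
        hGconst ⟨0, by omega⟩
      have hbc2 : ((l ⟨0, by omega⟩) ^ (-(1/2):ℝ))^3 * (v ⟨(0:ℕ), by omega⟩ * v ⟨0+1, by omega⟩) = c := by
        rw [b_cubed (hl _)]
      have t2 := cube_id (Real.rpow_pos_of_pos (hl ⟨0, by omega⟩) _)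
        (hvpos ⟨(0:ℕ), by omega⟩) (hvpos ⟨0+1, by omega⟩) hbc2
      rw [hU1, hUval 1 (by omega) (by omega), hU0]
      have hx0 := x_pow_rhs (hvpos ⟨(0:ℕ), by omega⟩)
      calc (v ⟨1, by omega⟩) ^ ((2:ℝ)/3) + 0
          = l ⟨0, by omega⟩ ^ (-(1/2):ℝ) * v ⟨0+1, by omega⟩
              * (v ⟨(0:ℕ), by omega⟩ ^ (1/3:ℝ) * c ^ (-1/3:ℝ)) := by
            rw [← t2, vmk 1 (0+1) (by omega) (by omega) (by omega)]
            ring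
        _ = (sigmaB n l * v ⟨(0:ℕ), by omega⟩)
              * (v ⟨(0:ℕ), by omega⟩ ^ (1/3:ℝ) * c ^ (-1/3:ℝ)) := by rw [h0']
        _ = K * ((v ⟨(0:ℕ), by omega⟩) ^ ((2:ℝ)/3)) ^ 2 := by
            rw [hKdef]
            linear_combination (sigmaB n l * c ^ (-1/3:ℝ)) * hx0
  -- the interlacing inequalities for v
  have hkey : ∀ j : ℕ, ∀ _hj : 2*j+3 ≤ n+1,
      (v ⟨j, by omega⟩) ^ ((2:ℝ)/3) < (v ⟨j+2, by omega⟩) ^ ((2:ℝ)/3) := by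
    intro j hj
    have hcmp := comb U K hUpos hU0 hrec j hj
    rw [hUval (j+1) (by omega) (by omega), hUval (j+3) (by omega) (by omega)] at hcmp
    exact hcmp
  have main : ∀ j : ℕ, 2*j+3 ≤ n+1 → a (j+1) < a (j+3) := by
    intro j hj
    have e1' : a (j+1) = (v ⟨j, by omega⟩ / v 0) ^ ((2:ℝ)/3) := ha ⟨j, by omega⟩
    have e2' : a (j+3) = (v ⟨j+2, by omega⟩ / v 0) ^ ((2:ℝ)/3) := ha ⟨j+2, by omega⟩
    rw [e1', e2', Real.div_rpow (hvpos _).le (hvpos 0).le,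
        Real.div_rpow (hvpos _).le (hvpos 0).le]
    have hv0 : (0:ℝ) < (v 0) ^ ((2:ℝ)/3) := Real.rpow_pos_of_pos (hvpos 0) _
    rw [div_lt_div_iff₀ hv0 hv0]
    nlinarith [hkey j hj, hv0]
  constructor
  · intro k hk
    constructor
    · intro m hm
      exact main (2*m) (by rcases hk with h | h <;> omega)
    · intro m hm
      exact main (2*m+1) (by rcases hk with h | h <;> omega)
  · intro k hk
    constructor
    · intro m hm
      exact main (2*m) (by rcases hk with h | h <;> omega)
    · intro m hm
      exact main (2*m+1) (by rcases hk with h | h <;> omega)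
end

section
/- Let n ∈ ℕ with n ≥ 1, let λ̄ be a minimizer of σ(B(·)) over Λ_n with σ̄ = σ(B(λ̄)), let v̄ be a Perron vector of B(λ̄), set v̄_0 := 0, v̄_{n+3} := 0, ā_i := (v̄_i/v̄_1)^{2/3} for i = 0,…,n+3, and define q̄ := 2 σ̄^{−2/3} λ̄_0^{−1/3}. Then ā_i < q̄ for all i = 0,…,n+3. -/
open Real

lemma S10.mulVec_apply (n : ℕ) (m : Fin (n+1) → ℝ) (u : Fin (n+2) → ℝ) (j : Fin (n+2)) :
    (Bmat n m).mulVec u j =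
      (if h : 0 < (j:ℕ) then
        m ⟨(j:ℕ)-1, by have := j.isLt; omega⟩ ^ (-(1/2):ℝ) * u ⟨(j:ℕ)-1, by have := j.isLt; omega⟩ else 0)
      + (if h : (j:ℕ) < n+1 then
        m ⟨(j:ℕ), h⟩ ^ (-(1/2):ℝ) * u ⟨(j:ℕ)+1, by omega⟩ else 0) := by
  have hsum : (Bmat n m).mulVec u j = ∑ k : Fin (n+2),
      ((if h : (k:ℕ)+1 = (j:ℕ) then m ⟨(k:ℕ), by have := j.isLt; omega⟩ ^ (-(1/2):ℝ) * u k else 0)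
      + (if h : (j:ℕ)+1 = (k:ℕ) then m ⟨(j:ℕ), by have := k.isLt; omega⟩ ^ (-(1/2):ℝ) * u k else 0)) := by
    rw [Matrix.mulVec, dotProduct]
    refine Finset.sum_congr rfl (fun k _ => ?_)
    simp only [Bmat, Matrix.of_apply]
    by_cases h1 : (j:ℕ)+1 = (k:ℕ)
    · have h2 : ¬ ((k:ℕ)+1 = (j:ℕ)) := by omega
      rw [dif_pos h1, dif_neg h2, dif_pos h1]
      ring
    · by_cases h2 : (k:ℕ)+1 = (j:ℕ)
      · rw [dif_neg h1, dif_pos h2, dif_pos h2, dif_neg h1]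
        ring
      · rw [dif_neg h1, dif_neg h2, dif_neg h2, dif_neg h1]
        ring
  rw [hsum, Finset.sum_add_distrib]
  congr 1
  · by_cases hj : 0 < (j:ℕ)
    · rw [dif_pos hj]
      rw [Finset.sum_eq_single_of_mem (⟨(j:ℕ)-1, by have := j.isLt; omega⟩ : Fin (n+2))
        (Finset.mem_univ _)]
      · rw [dif_pos (by simp; omega)]
      · intro b _ hb
        rw [dif_neg]
        intro hb1
        exact hb (by apply Fin.ext; simp; omega)
    · rw [dif_neg hj]
      apply Finset.sum_eq_zero
      intro k _
      rw [dif_neg (by omega)]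
  · by_cases hj : (j:ℕ) < n+1
    · rw [dif_pos hj]
      rw [Finset.sum_eq_single_of_mem (⟨(j:ℕ)+1, by omega⟩ : Fin (n+2))
        (Finset.mem_univ _)]
      · rw [dif_pos (by simp)]
      · intro b _ hb
        rw [dif_neg]
        intro hb1
        exact hb (by apply Fin.ext; simp; omega)
    · rw [dif_neg hj]
      apply Finset.sum_eq_zero
      intro k _
      rw [dif_neg (by have := k.isLt; omega)]

lemma S10.transpose_Bmat (n : ℕ) (m : Fin (n+1) → ℝ) : (Bmat n m).transpose = Bmat n m := by
  ext i j
  simp only [Matrix.transpose_apply, Bmat, Matrix.of_apply]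
  split_ifs <;> first | rfl | omega

/-- uniqueness: an eigenvector vanishing at index 0 is zero -/

lemma S10.eigen_unique (n : ℕ) (l : Fin (n+1) → ℝ) (hl : ∀ i, 0 < l i) (σ : ℝ)
    (z : Fin (n+2) → ℝ) (hz : (Bmat n l).mulVec z = σ • z)
    (h0 : z ⟨0, by omega⟩ = 0) : z = 0 := by
  have key : ∀ k, (hk : k < n+2) → z ⟨k, hk⟩ = 0 := by
    intro k
    induction k using Nat.strong_induction_on with
    | _ k ih =>
      intro hk
      match k, hk with
      | 0, hk => exact h0
      | 1, hk =>
        have hrow := congrFun hz ⟨0, by omega⟩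
        rw [S10.mulVec_apply] at hrow
        simp only [Pi.smul_apply, smul_eq_mul] at hrow
        rw [dif_neg (by simp), dif_pos (by omega)] at hrow
        have hl0 : (0:ℝ) < l ⟨0, by omega⟩ ^ (-(1/2):ℝ) := rpow_pos_of_pos (hl _) _
        rw [h0] at hrow
        have hmul : l ⟨0, by omega⟩ ^ (-(1/2):ℝ) * z ⟨0+1, by omega⟩ = 0 := by linarith
        rcases mul_eq_zero.mp hmul with h | h
        · exact absurd h (ne_of_gt hl0)
        · exact h
      | (m+2), hk =>
        have hrow := congrFun hz ⟨m+1, by omega⟩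
        rw [S10.mulVec_apply] at hrow
        simp only [Pi.smul_apply, smul_eq_mul] at hrow
        rw [dif_pos (by simp), dif_pos (by simp; omega)] at hrow
        have e1 : z ⟨m, by omega⟩ = 0 := ih m (by omega) (by omega)
        have e2 : z ⟨m+1, by omega⟩ = 0 := ih (m+1) (by omega) (by omega)
        have hz1 : (⟨m+1-1, by omega⟩ : Fin (n+2)) = ⟨m, by omega⟩ := by simp
        rw [hz1, e1, e2] at hrow
        have hlp : (0:ℝ) < l ⟨m+1, by omega⟩ ^ (-(1/2):ℝ) := rpow_pos_of_pos (hl _) _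
        have hmul : l ⟨m+1, by omega⟩ ^ (-(1/2):ℝ) * z ⟨m+1+1, by omega⟩ = 0 := by linarith
        rcases mul_eq_zero.mp hmul with h | h
        · exact absurd h (ne_of_gt hlp)
        · exact h
  funext j
  have := key (j:ℕ) j.isLt
  simpa using this

lemma S10.exists_w (n : ℕ) (l : Fin (n+1) → ℝ) (hl : ∀ i, 0 < l i) (σ : ℝ)
    (v : Fin (n+2) → ℝ) (hv0 : ∀ i, 0 < v i)
    (hBv : (Bmat n l).mulVec v = σ • v)
    (r : Fin (n+2) → ℝ) (hr : ∑ j, v j * r j = 0) :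
    ∃ w : Fin (n+2) → ℝ, (Bmat n l).mulVec w = σ • w + r := by
  classical
  set T : (Fin (n+2) → ℝ) →ₗ[ℝ] (Fin (n+2) → ℝ) :=
    (Bmat n l).mulVecLin - σ • LinearMap.id with hT
  have hTapp : ∀ x, T x = (Bmat n l).mulVec x - σ • x := by
    intro x; simp [hT, Matrix.mulVecLin]
  set φ : (Fin (n+2) → ℝ) →ₗ[ℝ] ℝ :=
    { toFun := fun x => ∑ j, v j * x j
      map_add' := by intro x y; simp [mul_add, Finset.sum_add_distrib]
      map_smul' := by intro c x; simp [Finset.mul_sum]; refine Finset.sum_congr rfl fun j _ => by ring } with hφ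
  have hφv : φ v = ∑ j, v j * v j := rfl
  have hφvpos : 0 < φ v := by
    rw [hφv]; exact Finset.sum_pos (fun j _ => mul_pos (hv0 j) (hv0 j)) ⟨⟨0, by omega⟩, Finset.mem_univ _⟩
  have hφsurj : Function.Surjective φ := by
    intro c
    refine ⟨(c / φ v) • v, ?_⟩
    rw [map_smul, smul_eq_mul, div_mul_cancel₀ c hφvpos.ne']
  -- ker T = span {v}
  have hvker : v ∈ LinearMap.ker T := by
    rw [LinearMap.mem_ker, hTapp, hBv, sub_self]
  have hker : LinearMap.ker T = Submodule.span ℝ {v} := by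
    apply le_antisymm
    · intro z hz
      rw [LinearMap.mem_ker, hTapp, sub_eq_zero] at hz
      have hz' : (Bmat n l).mulVec (z - (z ⟨0, by omega⟩ / v ⟨0, by omega⟩) • v)
          = σ • (z - (z ⟨0, by omega⟩ / v ⟨0, by omega⟩) • v) := by
        rw [Matrix.mulVec_sub, Matrix.mulVec_smul, hz, hBv, smul_sub, smul_comm]
      have h0 : (z - (z ⟨0, by omega⟩ / v ⟨0, by omega⟩) • v) ⟨0, by omega⟩ = 0 := by
        simp only [Pi.sub_apply, Pi.smul_apply, smul_eq_mul]
        rw [div_mul_cancel₀ _ (ne_of_gt (hv0 _)), sub_self]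
      have := S10.eigen_unique n l hl σ _ hz' h0
      have hzv : z = (z ⟨0, by omega⟩ / v ⟨0, by omega⟩) • v := by
        have := sub_eq_zero.mp this
        exact this
      rw [hzv]
      exact Submodule.smul_mem _ _ (Submodule.mem_span_singleton_self v)
    · rw [Submodule.span_le, Set.singleton_subset_iff]
      exact hvker
  have hvne : v ≠ 0 := by
    intro h
    have := hv0 ⟨0, by omega⟩
    rw [h] at this
    simp at this
  -- finranks
  have hdim : Module.finrank ℝ (Fin (n+2) → ℝ) = n+2 := by
    simp [Module.finrank_fintype_fun_eq_card]
  have hkerdim : Module.finrank ℝ (LinearMap.ker T) = 1 := by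
    rw [hker]; exact finrank_span_singleton hvne
  have hrange : Module.finrank ℝ (LinearMap.range T) = n+1 := by
    have := LinearMap.finrank_range_add_finrank_ker T
    rw [hkerdim, hdim] at this
    omega
  have hkerφ : Module.finrank ℝ (LinearMap.ker φ) = n+1 := by
    have := LinearMap.finrank_range_add_finrank_ker φ
    rw [LinearMap.range_eq_top.mpr hφsurj] at this
    rw [hdim] at this
    simp [finrank_top] at this
    omega
  have hle : LinearMap.range T ≤ LinearMap.ker φ := by
    rintro x ⟨y, rfl⟩
    rw [LinearMap.mem_ker, hTapp]
    show (∑ j, v j * ((Bmat n l).mulVec y - σ • y) j) = 0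
    have expand : ∀ j, v j * ((Bmat n l).mulVec y - σ • y) j
        = v j * (Bmat n l).mulVec y j - σ * (v j * y j) := by
      intro j; simp [Pi.sub_apply]; ring
    rw [Finset.sum_congr rfl (fun j _ => expand j), Finset.sum_sub_distrib]
    have h1 : ∑ j, v j * (Bmat n l).mulVec y j = ∑ j, σ * (v j * y j) := by
      have : ∑ j, v j * (Bmat n l).mulVec y j = dotProduct v ((Bmat n l).mulVec y) := rfl
      rw [this, Matrix.dotProduct_mulVec, ← Matrix.mulVec_transpose, S10.transpose_Bmat, hBv]
      simp [dotProduct, Finset.mul_sum]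
      exact Finset.sum_congr rfl fun j _ => by ring
    rw [h1, sub_self]
  have heq : LinearMap.range T = LinearMap.ker φ :=
    Submodule.eq_of_le_of_finrank_le hle (by rw [hrange, hkerφ])
  have hrker : r ∈ LinearMap.ker φ := hr
  rw [← heq] at hrker
  obtain ⟨w, hw⟩ := hrker
  refine ⟨w, ?_⟩
  rw [hTapp] at hw
  rw [← hw]
  funext j
  simp

lemma S10.Bmat_nonneg (n : ℕ) (m : Fin (n+1) → ℝ) (hm : ∀ i, 0 < m i) (j k : Fin (n+2)) :
    0 ≤ Bmat n m j k := by
  simp only [Bmat, Matrix.of_apply]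
  split_ifs <;> first | exact le_of_lt (rpow_pos_of_pos (hm _) _) | rfl

lemma S10.collatz (n : ℕ) (m : Fin (n+1) → ℝ) (hm : ∀ i, 0 < m i)
    (u : Fin (n+2) → ℝ) (hu : ∀ j, 0 < u j) (ψ : ℝ)
    (hψ : ∀ j, (Bmat n m).mulVec u j ≤ ψ * u j) :
    sigmaB n m ≤ ψ := by
  have hψ0 : 0 < ψ := by
    have h0 : (0:ℝ) < (Bmat n m).mulVec u ⟨0, by omega⟩ := by
      rw [S10.mulVec_apply]
      rw [dif_neg (by simp), dif_pos (by simp)]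
      have := rpow_pos_of_pos (hm ⟨0, by omega⟩) (-(1/2):ℝ)
      have := hu (⟨0+1, by omega⟩ : Fin (n+2))
      positivity
    have h1 := lt_of_lt_of_le h0 (hψ ⟨0, by omega⟩)
    by_contra hc
    push_neg at hc
    nlinarith [hu (⟨0, by omega⟩ : Fin (n+2))]
  apply Real.sSup_le _ (le_of_lt hψ0)
  rintro μ ⟨z, hz0, hzB⟩
  -- pick maximizer of |z|/u
  obtain ⟨j0, -, hj0⟩ := Finset.exists_max_image Finset.univ (fun j => |z j| / u j) ⟨⟨0, by omega⟩, Finset.mem_univ _⟩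
  set M := |z j0| / u j0 with hM
  have hMz : ∀ k, |z k| ≤ M * u k := by
    intro k
    have := hj0 k (Finset.mem_univ _)
    rw [div_le_iff₀ (hu k)] at this
    simpa [mul_comm] using this
  have hMpos : 0 < M := by
    rcases Function.ne_iff.mp hz0 with ⟨j1, hj1⟩
    have h1 : 0 < |z j1| := abs_pos.mpr hj1
    have := hj0 j1 (Finset.mem_univ _)
    have h2 : 0 < |z j1| / u j1 := div_pos h1 (hu j1)
    exact lt_of_lt_of_le h2 this
  have hzj0 : 0 < |z j0| := by
    have : M * u j0 = |z j0| := by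
      rw [hM, div_mul_cancel₀ _ (ne_of_gt (hu j0))]
    nlinarith [hu j0, hMpos]
  -- main estimate
  have key : |μ| * |z j0| ≤ ψ * |z j0| := by
    have h1 : μ * z j0 = (Bmat n m).mulVec z j0 := by rw [hzB]; simp
    have h2 : |μ * z j0| ≤ ∑ k, Bmat n m j0 k * |z k| := by
      rw [h1, Matrix.mulVec, dotProduct]
      refine le_trans (Finset.abs_sum_le_sum_abs _ _) (Finset.sum_le_sum fun k _ => ?_)
      rw [abs_mul, abs_of_nonneg (S10.Bmat_nonneg n m hm j0 k)]
    have h3 : ∑ k, Bmat n m j0 k * |z k| ≤ ∑ k, Bmat n m j0 k * (M * u k) :=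
      Finset.sum_le_sum fun k _ => mul_le_mul_of_nonneg_left (hMz k) (S10.Bmat_nonneg n m hm j0 k)
    have h4 : ∑ k, Bmat n m j0 k * (M * u k) = M * (Bmat n m).mulVec u j0 := by
      rw [Matrix.mulVec, dotProduct, Finset.mul_sum]
      exact Finset.sum_congr rfl fun k _ => by ring
    have h5 : M * (Bmat n m).mulVec u j0 ≤ M * (ψ * u j0) :=
      mul_le_mul_of_nonneg_left (hψ j0) (le_of_lt hMpos)
    have h6 : M * (ψ * u j0) = ψ * |z j0| := by
      rw [hM]
      field_simp [(hu j0).ne']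
    calc |μ| * |z j0| = |μ * z j0| := (abs_mul μ (z j0)).symm
      _ ≤ ∑ k, Bmat n m j0 k * |z k| := h2
      _ ≤ ∑ k, Bmat n m j0 k * (M * u k) := h3
      _ = M * (Bmat n m).mulVec u j0 := h4
      _ ≤ M * (ψ * u j0) := h5
      _ = ψ * |z j0| := h6
  have : |μ| ≤ ψ := le_of_mul_le_mul_right (by linarith [key]) hzj0
  exact le_trans (le_abs_self μ) this

lemma S10.hasDerivAt_edge (a d x y : ℝ) (ha : 0 < a) :
    HasDerivAt (fun t => (a + t*d) ^ (-(1/2):ℝ) * (x + t*y))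
      ((-(1/2)) * a ^ (-(3:ℝ)/2) * d * x + a ^ (-(1/2):ℝ) * y) 0 := by
  have h1 : HasDerivAt (fun t : ℝ => a + t * d) d 0 := by
    simpa using ((hasDerivAt_id (0:ℝ)).mul_const d).const_add a
  have hne : a + 0 * d ≠ 0 := by simpa using ne_of_gt ha
  have h2 := h1.rpow_const (p := (-(1/2):ℝ)) (Or.inl hne)
  have h3 : HasDerivAt (fun t : ℝ => x + t * y) y 0 := by
    simpa using ((hasDerivAt_id (0:ℝ)).mul_const y).const_add x
  have h4 := h2.mul h3
  refine h4.congr_deriv ?_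
  have he : (-(1/2) - 1 : ℝ) = (-(3:ℝ)/2) := by norm_num
  rw [he]
  simp only [zero_mul, add_zero, mul_zero, mul_one, one_mul]
  ring

lemma S10.rpow_up {x : ℝ} (hx : 0 < x) (a b : ℝ) (h : a + 1 = b) : x ^ a * x = x ^ b := by
  nth_rewrite 2 [← Real.rpow_one x]
  rw [← Real.rpow_add hx, h]

lemma S10.rpow_can {x : ℝ} (hx : 0 < x) (a : ℝ) : x ^ a * x ^ (-a) = 1 := by
  rw [← Real.rpow_add hx]
  simp

lemma S10.sq_rpow {x : ℝ} (hx : 0 ≤ x) : (x ^ ((2:ℝ)/3)) ^ 2 = x ^ ((4:ℝ)/3) := by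
  rw [← Real.rpow_natCast (x ^ ((2:ℝ)/3)) 2, ← Real.rpow_mul hx]
  norm_num

-- c^{-1/3} y^{1/3} * (c^{1/3} (x*y)^{-1/3} x) = x^{2/3}
lemma S10.term_simp (c x y : ℝ) (hc : 0 < c) (hx : 0 < x) (hy : 0 < y) :
    c ^ (-(1:ℝ)/3) * y ^ ((1:ℝ)/3) * (c ^ ((1:ℝ)/3) * (x * y) ^ (-(1:ℝ)/3) * x)
      = x ^ ((2:ℝ)/3) := by
  have e0 : (x * y) ^ (-(1:ℝ)/3) = x ^ (-(1:ℝ)/3) * y ^ (-(1:ℝ)/3) :=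
    Real.mul_rpow hx.le hy.le
  have e1 : c ^ ((1:ℝ)/3) * c ^ (-(1:ℝ)/3) = 1 := by
    rw [show (-(1:ℝ)/3) = -((1:ℝ)/3) by norm_num]
    exact S10.rpow_can hc _
  have e2 : y ^ ((1:ℝ)/3) * y ^ (-(1:ℝ)/3) = 1 := by
    rw [show (-(1:ℝ)/3) = -((1:ℝ)/3) by norm_num]
    exact S10.rpow_can hy _
  have e3 : x ^ (-(1:ℝ)/3) * x = x ^ ((2:ℝ)/3) := S10.rpow_up hx _ _ (by norm_num)
  calc c ^ (-(1:ℝ)/3) * y ^ ((1:ℝ)/3) * (c ^ ((1:ℝ)/3) * (x * y) ^ (-(1:ℝ)/3) * x)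
      = (c ^ ((1:ℝ)/3) * c ^ (-(1:ℝ)/3)) * (y ^ ((1:ℝ)/3) * y ^ (-(1:ℝ)/3)) * (x ^ (-(1:ℝ)/3) * x) := by
        rw [e0]; ring
    _ = x ^ ((2:ℝ)/3) := by rw [e1, e2, e3]; ring

lemma S10.lhs_simp (c σ y : ℝ) (hc : 0 < c) (hy : 0 < y) :
    c ^ (-(1:ℝ)/3) * y ^ ((1:ℝ)/3) * (σ * y) = (σ * c ^ (-(1:ℝ)/3)) * (y ^ ((2:ℝ)/3))^2 := by
  rw [S10.sq_rpow hy.le]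
  have e1 : y ^ ((1:ℝ)/3) * y = y ^ ((4:ℝ)/3) := S10.rpow_up hy _ _ (by norm_num)
  calc c ^ (-(1:ℝ)/3) * y ^ ((1:ℝ)/3) * (σ * y)
      = σ * c ^ (-(1:ℝ)/3) * (y ^ ((1:ℝ)/3) * y) := by ring
    _ = (σ * c ^ (-(1:ℝ)/3)) * y ^ ((4:ℝ)/3) := by rw [e1]

lemma S10.recursion_mid (σ c x y z : ℝ) (hc : 0 < c) (hx : 0 < x) (hy : 0 < y) (hz : 0 < z)
    (E : σ * y = c ^ ((1:ℝ)/3) * (x * y) ^ (-(1:ℝ)/3) * x + c ^ ((1:ℝ)/3) * (y * z) ^ (-(1:ℝ)/3) * z) :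
    x ^ ((2:ℝ)/3) + z ^ ((2:ℝ)/3) = (σ * c ^ (-(1:ℝ)/3)) * (y ^ ((2:ℝ)/3))^2 := by
  have h1 := congrArg (fun u => c ^ (-(1:ℝ)/3) * y ^ ((1:ℝ)/3) * u) E
  simp only [mul_add] at h1
  rw [S10.term_simp c x y hc hx hy] at h1
  have hcomm : (y * z) ^ (-(1:ℝ)/3) = (z * y) ^ (-(1:ℝ)/3) := by rw [mul_comm]
  rw [hcomm, S10.term_simp c z y hc hz hy] at h1
  rw [S10.lhs_simp c σ y hc hy] at h1
  linarith

lemma S10.recursion_left (σ c y z : ℝ) (hc : 0 < c) (hy : 0 < y) (hz : 0 < z)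
    (E : σ * y = c ^ ((1:ℝ)/3) * (y * z) ^ (-(1:ℝ)/3) * z) :
    z ^ ((2:ℝ)/3) = (σ * c ^ (-(1:ℝ)/3)) * (y ^ ((2:ℝ)/3))^2 := by
  have h1 := congrArg (fun u => c ^ (-(1:ℝ)/3) * y ^ ((1:ℝ)/3) * u) E
  have hcomm : (y * z) ^ (-(1:ℝ)/3) = (z * y) ^ (-(1:ℝ)/3) := by rw [mul_comm]
  rw [hcomm, S10.term_simp c z y hc hz hy] at h1
  rw [S10.lhs_simp c σ y hc hy] at h1
  linarith

lemma S10.recursion_right (σ c x y : ℝ) (hc : 0 < c) (hx : 0 < x) (hy : 0 < y)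
    (E : σ * y = c ^ ((1:ℝ)/3) * (x * y) ^ (-(1:ℝ)/3) * x) :
    x ^ ((2:ℝ)/3) = (σ * c ^ (-(1:ℝ)/3)) * (y ^ ((2:ℝ)/3))^2 := by
  have h1 := congrArg (fun u => c ^ (-(1:ℝ)/3) * y ^ ((1:ℝ)/3) * u) E
  rw [S10.term_simp c x y hc hx hy] at h1
  rw [S10.lhs_simp c σ y hc hy] at h1
  linarith

lemma S10.linv (L X Y c : ℝ) (hL : 0 < L) (hX : 0 < X) (hY : 0 < Y) (hc : 0 < c)
    (h : L ^ (-(3:ℝ)/2) * X * Y = c) :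
    L ^ (-(1/2):ℝ) = c ^ ((1:ℝ)/3) * (X * Y) ^ (-(1:ℝ)/3) := by
  have hXY : (0:ℝ) < X * Y := mul_pos hX hY
  have h2 : L ^ (-(3:ℝ)/2) = c / (X*Y) := by
    rw [eq_div_iff hXY.ne']
    linear_combination h
  have h3 : (L ^ (-(3:ℝ)/2)) ^ ((1:ℝ)/3) = L ^ (-(1/2):ℝ) := by
    rw [← Real.rpow_mul hL.le]; norm_num
  rw [← h3, h2, Real.div_rpow hc.le hXY.le, div_eq_mul_inv,
    show (-(1:ℝ)/3) = -((1:ℝ)/3) by norm_num, Real.rpow_neg hXY.le]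

lemma S10.Ks1 (σ lz y1 y2 : ℝ) (hσ : 0 < σ) (hl : 0 < lz) (h1 : 0 < y1) (h2 : 0 < y2)
    (hrow : lz ^ (-(1/2):ℝ) * y2 = σ * y1) :
    (σ * (lz ^ (-(3:ℝ)/2) * y1 * y2) ^ (-(1:ℝ)/3)) * y1 ^ ((2:ℝ)/3)
      = σ ^ ((2:ℝ)/3) * lz ^ ((1:ℝ)/3) := by
  have hcan : lz ^ ((1:ℝ)/2) * lz ^ (-(1/2):ℝ) = 1 := by
    rw [show (-(1/2):ℝ) = -((1:ℝ)/2) by norm_num]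
    exact S10.rpow_can hl _
  have hv2 : y2 = σ * lz ^ ((1:ℝ)/2) * y1 := by
    have h' : lz ^ ((1:ℝ)/2) * (lz ^ (-(1/2):ℝ) * y2) = lz ^ ((1:ℝ)/2) * (σ * y1) := by rw [hrow]
    calc y2 = (lz ^ ((1:ℝ)/2) * lz ^ (-(1/2):ℝ)) * y2 := by rw [hcan]; ring
      _ = lz ^ ((1:ℝ)/2) * (σ * y1) := by rw [mul_assoc]; exact h'
      _ = σ * lz ^ ((1:ℝ)/2) * y1 := by ring
  have hll : lz ^ (-(3:ℝ)/2) * lz ^ ((1:ℝ)/2) = lz ^ (-(1:ℝ)) := by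
    rw [← Real.rpow_add hl]; norm_num
  have hvv : y1 ^ (2:ℝ) = y1 * y1 := by
    rw [show (2:ℝ) = (1:ℝ)+1 by norm_num, Real.rpow_add h1, Real.rpow_one]
  have hinner : lz ^ (-(3:ℝ)/2) * y1 * y2 = σ * lz ^ (-(1:ℝ)) * y1 ^ (2:ℝ) := by
    rw [hv2, hvv]
    calc lz ^ (-(3:ℝ)/2) * y1 * (σ * lz ^ ((1:ℝ)/2) * y1)
        = σ * (lz ^ (-(3:ℝ)/2) * lz ^ ((1:ℝ)/2)) * (y1 * y1) := by ring
      _ = σ * lz ^ (-(1:ℝ)) * (y1 * y1) := by rw [hll]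
  have houter : (σ * lz ^ (-(1:ℝ)) * y1 ^ (2:ℝ)) ^ (-(1:ℝ)/3)
      = σ ^ (-(1:ℝ)/3) * lz ^ ((1:ℝ)/3) * y1 ^ (-(2:ℝ)/3) := by
    rw [Real.mul_rpow (mul_nonneg hσ.le (Real.rpow_nonneg hl.le _)) (Real.rpow_nonneg h1.le _),
      Real.mul_rpow hσ.le (Real.rpow_nonneg hl.le _),
      ← Real.rpow_mul hl.le, ← Real.rpow_mul h1.le]
    norm_num
  rw [hinner, houter]
  have c1 : σ ^ (-(1:ℝ)/3) * σ = σ ^ ((2:ℝ)/3) := S10.rpow_up hσ _ _ (by norm_num)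
  have c2 : y1 ^ (-(2:ℝ)/3) * y1 ^ ((2:ℝ)/3) = 1 := by
    rw [mul_comm, show (-(2:ℝ)/3) = -((2:ℝ)/3) by norm_num]
    exact S10.rpow_can h1 _
  calc (σ * (σ ^ (-(1:ℝ)/3) * lz ^ ((1:ℝ)/3) * y1 ^ (-(2:ℝ)/3))) * y1 ^ ((2:ℝ)/3)
      = (σ ^ (-(1:ℝ)/3) * σ) * lz ^ ((1:ℝ)/3) * (y1 ^ (-(2:ℝ)/3) * y1 ^ ((2:ℝ)/3)) := by ring
    _ = σ ^ ((2:ℝ)/3) * lz ^ ((1:ℝ)/3) := by rw [c1, c2, mul_one]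

set_option maxHeartbeats 2000000 in
lemma S10.kkt (n : ℕ) (l : Fin (n+1) → ℝ) (hmin : IsMinimizer n l)
    (v : Fin (n+2) → ℝ) (hv : IsPerronVector n l v) (p r : Fin (n+1)) :
    l p ^ (-(3:ℝ)/2) * v ⟨(p:ℕ), by have := p.isLt; omega⟩ * v ⟨(p:ℕ)+1, by have := p.isLt; omega⟩
      ≤ l r ^ (-(3:ℝ)/2) * v ⟨(r:ℕ), by have := r.isLt; omega⟩ * v ⟨(r:ℕ)+1, by have := r.isLt; omega⟩ := by
  classical
  obtain ⟨⟨hlpos, hsum⟩, hminle⟩ := hmin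
  obtain ⟨hv0, hnorm, hBv⟩ := hv
  by_cases hpr : p = r
  · subst hpr; exact le_refl _
  set σ := sigmaB n l with hσ
  -- the perturbation direction
  set δ : Fin (n+1) → ℝ := fun i => (if i = p then (1:ℝ) else 0) - (if i = r then (1:ℝ) else 0) with hδ
  have hδsum : ∑ i, δ i = 0 := by
    simp [hδ, Finset.sum_sub_distrib]
  -- edge weight function
  set cE : Fin (n+1) → ℝ := fun i =>
    l i ^ (-(3:ℝ)/2) * v ⟨(i:ℕ), by have := i.isLt; omega⟩ * v ⟨(i:ℕ)+1, by have := i.isLt; omega⟩ with hcE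
  -- the derivative of (B(l+tδ) v)_j in t at 0
  set bp : Fin (n+2) → ℝ := fun j =>
    (if h : 0 < (j:ℕ) then
      (-(1/2):ℝ) * l ⟨(j:ℕ)-1, by have := j.isLt; omega⟩ ^ (-(3:ℝ)/2) * δ ⟨(j:ℕ)-1, by have := j.isLt; omega⟩
        * v ⟨(j:ℕ)-1, by have := j.isLt; omega⟩ else 0)
    + (if h : (j:ℕ) < n+1 then
      (-(1/2):ℝ) * l ⟨(j:ℕ), h⟩ ^ (-(3:ℝ)/2) * δ ⟨(j:ℕ), h⟩ * v ⟨(j:ℕ)+1, by omega⟩ else 0) with hbp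
  -- the value c0 = ∑ v_j bp_j
  have hc0 : ∑ j, v j * bp j = - ∑ i : Fin (n+1), δ i * cE i := by
    have hsplit : ∑ j, v j * bp j
        = (∑ j : Fin (n+2), v j * (if h : 0 < (j:ℕ) then
            (-(1/2):ℝ) * l ⟨(j:ℕ)-1, by have := j.isLt; omega⟩ ^ (-(3:ℝ)/2) * δ ⟨(j:ℕ)-1, by have := j.isLt; omega⟩
            * v ⟨(j:ℕ)-1, by have := j.isLt; omega⟩ else 0))
        + (∑ j : Fin (n+2), v j * (if h : (j:ℕ) < n+1 then
            (-(1/2):ℝ) * l ⟨(j:ℕ), h⟩ ^ (-(3:ℝ)/2) * δ ⟨(j:ℕ), h⟩ * v ⟨(j:ℕ)+1, by omega⟩ else 0)) := by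
      rw [← Finset.sum_add_distrib]
      refine Finset.sum_congr rfl fun j _ => ?_
      rw [hbp]
      ring
    rw [hsplit]
    have hS1 : (∑ j : Fin (n+2), v j * (if h : 0 < (j:ℕ) then
            (-(1/2):ℝ) * l ⟨(j:ℕ)-1, by have := j.isLt; omega⟩ ^ (-(3:ℝ)/2) * δ ⟨(j:ℕ)-1, by have := j.isLt; omega⟩
            * v ⟨(j:ℕ)-1, by have := j.isLt; omega⟩ else 0))
        = ∑ i : Fin (n+1), v ⟨(i:ℕ)+1, by have := i.isLt; omega⟩ *
            ((-(1/2):ℝ) * l i ^ (-(3:ℝ)/2) * δ i * v ⟨(i:ℕ), by have := i.isLt; omega⟩) := by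
      rw [Fin.sum_univ_succ]
      have h0 : ¬ (0 < ((0 : Fin (n+2)):ℕ)) := by simp
      rw [dif_neg h0]
      simp only [mul_zero, zero_add]
      refine Finset.sum_congr rfl fun i _ => ?_
      have hpos : 0 < ((i.succ : Fin (n+2)):ℕ) := by simp
      rw [dif_pos hpos]
      have e1 : (⟨((i.succ : Fin (n+2)):ℕ)-1, by have := i.isLt; simp only [Fin.val_succ]; omega⟩ : Fin (n+1)) = i := by
        apply Fin.ext; simp
      have e2 : (⟨((i.succ : Fin (n+2)):ℕ)-1, by have := (i.succ : Fin (n+2)).isLt; omega⟩ : Fin (n+2))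
          = ⟨(i:ℕ), by have := i.isLt; omega⟩ := by
        apply Fin.ext; simp
      have e3 : (i.succ : Fin (n+2)) = ⟨(i:ℕ)+1, by have := i.isLt; omega⟩ := by
        apply Fin.ext; simp
      rw [e1, e2, congrArg v e3]
    have hS2 : (∑ j : Fin (n+2), v j * (if h : (j:ℕ) < n+1 then
            (-(1/2):ℝ) * l ⟨(j:ℕ), h⟩ ^ (-(3:ℝ)/2) * δ ⟨(j:ℕ), h⟩ * v ⟨(j:ℕ)+1, by omega⟩ else 0))
        = ∑ i : Fin (n+1), v ⟨(i:ℕ), by have := i.isLt; omega⟩ *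
            ((-(1/2):ℝ) * l i ^ (-(3:ℝ)/2) * δ i * v ⟨(i:ℕ)+1, by have := i.isLt; omega⟩) := by
      rw [Fin.sum_univ_castSucc]
      have hlast : ¬ (((Fin.last (n+1) : Fin (n+2)):ℕ) < n+1) := by simp
      rw [dif_neg hlast]
      simp only [mul_zero, add_zero]
      refine Finset.sum_congr rfl fun i _ => ?_
      have hlt : ((i.castSucc : Fin (n+2)):ℕ) < n+1 := by have := i.isLt; simp; omega
      rw [dif_pos hlt]
      have e1 : (⟨((i.castSucc : Fin (n+2)):ℕ), hlt⟩ : Fin (n+1)) = i := by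
        apply Fin.ext; simp
      have e2 : (⟨((i.castSucc : Fin (n+2)):ℕ)+1, by omega⟩ : Fin (n+2))
          = ⟨(i:ℕ)+1, by have := i.isLt; omega⟩ := by
        apply Fin.ext; simp
      have e3 : (i.castSucc : Fin (n+2)) = ⟨(i:ℕ), by have := i.isLt; omega⟩ := by
        apply Fin.ext; simp
      rw [e1, e2, congrArg v e3]
    rw [hS1, hS2, ← Finset.sum_add_distrib, ← Finset.sum_neg_distrib]
    refine Finset.sum_congr rfl fun i _ => ?_
    rw [hcE]
    ring
  have hδval : ∑ i : Fin (n+1), δ i * cE i = cE p - cE r := by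
    have hterm : ∀ i, δ i * cE i = (if i = p then cE i else 0) - (if i = r then cE i else 0) := by
      intro i
      rw [hδ]
      by_cases h1 : i = p <;> by_cases h2 : i = r
      · exact absurd (h1 ▸ h2) hpr
      · simp [h1, h2, hpr]
      · simp [h1, h2, Ne.symm hpr]
      · simp [h1, h2]
    rw [Finset.sum_congr rfl (fun i _ => hterm i), Finset.sum_sub_distrib,
      Finset.sum_ite_eq' Finset.univ p cE, Finset.sum_ite_eq' Finset.univ r cE]
    simp
  set c0 : ℝ := cE r - cE p with hc0def
  have hc0val : ∑ j, v j * bp j = c0 := by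
    rw [hc0, hδval, hc0def]; ring
  set rvec : Fin (n+2) → ℝ := fun j => c0 * v j - bp j with hrvec
  have hrv : ∑ j, v j * rvec j = 0 := by
    have hterm : ∀ j, v j * rvec j = c0 * v j ^ 2 - v j * bp j := by
      intro j; rw [hrvec]; ring
    rw [Finset.sum_congr rfl (fun j _ => hterm j), Finset.sum_sub_distrib, ← Finset.mul_sum,
      hnorm, hc0val]
    ring
  obtain ⟨w, hw⟩ := S10.exists_w n l hlpos σ v hv0 hBv rvec hrv
  by_contra hcon
  push_neg at hcon
  have hconE : cE r < cE p := hcon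
  have hc0neg : c0 < 0 := by rw [hc0def]; linarith
  -- the perturbed quantities
  set N : Fin (n+2) → ℝ → ℝ :=
    fun j t => (Bmat n (fun i => l i + t * δ i)).mulVec (fun k => v k + t * w k) j with hN
  have hNder : ∀ j, HasDerivAt (N j) (σ * w j + c0 * v j) 0 := by
    intro j
    have hfun : N j = fun t =>
        (if h : 0 < (j:ℕ) then
          (l ⟨(j:ℕ)-1, by have := j.isLt; omega⟩ + t * δ ⟨(j:ℕ)-1, by have := j.isLt; omega⟩) ^ (-(1/2):ℝ)
            * (v ⟨(j:ℕ)-1, by have := j.isLt; omega⟩ + t * w ⟨(j:ℕ)-1, by have := j.isLt; omega⟩) else 0)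
        + (if h : (j:ℕ) < n+1 then
          (l ⟨(j:ℕ), h⟩ + t * δ ⟨(j:ℕ), h⟩) ^ (-(1/2):ℝ)
            * (v ⟨(j:ℕ)+1, by omega⟩ + t * w ⟨(j:ℕ)+1, by omega⟩) else 0) := by
      funext t
      exact S10.mulVec_apply n _ _ j
    rw [hfun]
    have hwj := congrFun hw j
    rw [S10.mulVec_apply] at hwj
    simp only [Pi.add_apply, Pi.smul_apply, smul_eq_mul, hrvec] at hwj
    have hbpj : bp j = (if h : 0 < (j:ℕ) then
        (-(1/2):ℝ) * l ⟨(j:ℕ)-1, by have := j.isLt; omega⟩ ^ (-(3:ℝ)/2) * δ ⟨(j:ℕ)-1, by have := j.isLt; omega⟩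
          * v ⟨(j:ℕ)-1, by have := j.isLt; omega⟩ else 0)
      + (if h : (j:ℕ) < n+1 then
        (-(1/2):ℝ) * l ⟨(j:ℕ), h⟩ ^ (-(3:ℝ)/2) * δ ⟨(j:ℕ), h⟩ * v ⟨(j:ℕ)+1, by omega⟩ else 0) := rfl
    by_cases h1 : 0 < (j:ℕ) <;> by_cases h2 : (j:ℕ) < n+1
    · simp only [dif_pos h1, dif_pos h2]
      rw [dif_pos h1, dif_pos h2] at hwj hbpj
      refine (HasDerivAt.add
        (S10.hasDerivAt_edge _ _ _ _ (hlpos ⟨(j:ℕ)-1, by have := j.isLt; omega⟩))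
        (S10.hasDerivAt_edge _ _ _ _ (hlpos ⟨(j:ℕ), h2⟩))).congr_deriv ?_
      linarith [hwj, hbpj]
    · simp only [dif_pos h1, dif_neg h2, add_zero]
      rw [dif_pos h1, dif_neg h2] at hwj hbpj
      rw [add_zero] at hwj hbpj
      refine (S10.hasDerivAt_edge _ _ _ _ (hlpos ⟨(j:ℕ)-1, by have := j.isLt; omega⟩)).congr_deriv ?_
      linarith [hwj, hbpj]
    · simp only [dif_neg h1, dif_pos h2, zero_add]
      rw [dif_neg h1, dif_pos h2] at hwj hbpj
      rw [zero_add] at hwj hbpj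
      refine (S10.hasDerivAt_edge _ _ _ _ (hlpos ⟨(j:ℕ), h2⟩)).congr_deriv ?_
      linarith [hwj, hbpj]
    · exact absurd (by omega : (j:ℕ) < n+1) h2
  have hN0 : ∀ j, N j 0 = σ * v j := by
    intro j
    have hl0 : (fun i => l i + (0:ℝ) * δ i) = l := by funext i; ring
    have hv0' : (fun k => v k + (0:ℝ) * w k) = v := by funext k; ring
    show (Bmat n (fun i => l i + (0:ℝ) * δ i)).mulVec (fun k => v k + (0:ℝ) * w k) j = σ * v j
    rw [hl0, hv0', hBv]
    simp
  have E3 : ∀ j : Fin (n+2), ∀ᶠ t in nhdsWithin (0:ℝ) (Set.Ioi 0),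
      N j t / (v j + t * w j) < σ := by
    intro j
    have hD : HasDerivAt (fun t => v j + t * w j) (w j) 0 := by
      simpa using ((hasDerivAt_id (0:ℝ)).mul_const (w j)).const_add (v j)
    have hne : v j + (0:ℝ) * w j ≠ 0 := by
      simpa using (hv0 j).ne'
    have hQ : HasDerivAt (fun t => N j t / (v j + t * w j)) c0 0 := by
      have hdiv := (hNder j).div hD hne
      refine hdiv.congr_deriv ?_
      rw [hN0 j]
      have hvj := (hv0 j).ne'
      field_simp
      rw [mul_zero, add_zero, div_eq_iff (pow_ne_zero 2 hvj)]
      ring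
    rw [hasDerivAt_iff_tendsto_slope] at hQ
    have hQ' : Filter.Tendsto (slope (fun t => N j t / (v j + t * w j)) 0)
        (nhdsWithin (0:ℝ) (Set.Ioi 0)) (nhds c0) :=
      hQ.mono_left (nhdsWithin_mono 0 (fun x hx => ne_of_gt hx))
    have hev : ∀ᶠ t in nhdsWithin (0:ℝ) (Set.Ioi 0),
        slope (fun t => N j t / (v j + t * w j)) 0 t < c0/2 :=
      hQ'.eventually (eventually_lt_nhds (by linarith))
    filter_upwards [hev, self_mem_nhdsWithin] with t hslope ht
    have ht0 : (0:ℝ) < t := ht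
    have hf0 : N j 0 / (v j + 0 * w j) = σ := by
      rw [hN0 j]
      have h1 : v j + 0 * w j = v j := by ring
      rw [h1, mul_div_assoc, div_self (hv0 j).ne', mul_one]
    rw [slope_def_field] at hslope
    -- hslope : (f t - f 0) / (t - 0) < c0/2
    rw [sub_zero, hf0] at hslope
    have h2 := (div_lt_iff₀ ht0).mp hslope
    nlinarith
  -- positivity eventualities
  have E1 : ∀ᶠ t in nhdsWithin (0:ℝ) (Set.Ioi 0), ∀ i, 0 < l i + t * δ i := by
    apply Filter.Eventually.filter_mono nhdsWithin_le_nhds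
    rw [Filter.eventually_all]
    intro i
    have hc : Filter.Tendsto (fun t : ℝ => l i + t * δ i) (nhds 0) (nhds (l i + 0 * δ i)) :=
      (continuous_const.add (continuous_id.mul continuous_const)).tendsto' 0 _ (by simp)
    exact hc.eventually (eventually_gt_nhds (by simpa using hlpos i))
  have E2 : ∀ᶠ t in nhdsWithin (0:ℝ) (Set.Ioi 0), ∀ k, 0 < v k + t * w k := by
    apply Filter.Eventually.filter_mono nhdsWithin_le_nhds
    rw [Filter.eventually_all]
    intro k
    have hc : Filter.Tendsto (fun t : ℝ => v k + t * w k) (nhds 0) (nhds (v k + 0 * w k)) :=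
      (continuous_const.add (continuous_id.mul continuous_const)).tendsto' 0 _ (by simp)
    exact hc.eventually (eventually_gt_nhds (by simpa using hv0 k))
  have E3' : ∀ᶠ t in nhdsWithin (0:ℝ) (Set.Ioi 0), ∀ j, N j t / (v j + t * w j) < σ :=
    Filter.eventually_all.mpr E3
  have E0 : ∀ᶠ t in nhdsWithin (0:ℝ) (Set.Ioi 0), (0:ℝ) < t :=
    Filter.eventually_of_mem self_mem_nhdsWithin (fun t ht => ht)
  obtain ⟨t, h1t, h2t, h3t, h0t⟩ := (E1.and (E2.and (E3'.and E0))).exists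
  have hfeas : Feasible n (fun i => l i + t * δ i) := by
    refine ⟨h1t, ?_⟩
    have hs : ∑ i, (l i + t * δ i) = ∑ i, l i := by
      rw [Finset.sum_add_distrib, ← Finset.mul_sum, hδsum, mul_zero, add_zero]
    rw [hs]
    exact hsum
  have hmle : σ ≤ sigmaB n (fun i => l i + t * δ i) := hminle _ hfeas
  have hney : (Finset.univ : Finset (Fin (n+2))).Nonempty := ⟨⟨0, by omega⟩, Finset.mem_univ _⟩
  set ψ := Finset.univ.sup' hney (fun j => N j t / (v j + t * w j)) with hψ
  have hψlt : ψ < σ := by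
    rw [hψ]
    exact (Finset.sup'_lt_iff hney).mpr fun j _ => h3t j
  have hcol : sigmaB n (fun i => l i + t * δ i) ≤ ψ := by
    apply S10.collatz n _ h1t (fun k => v k + t * w k) h2t ψ
    intro j
    have hle := Finset.le_sup' (fun j => N j t / (v j + t * w j)) (Finset.mem_univ j)
    rw [← hψ] at hle
    exact (div_le_iff₀ (h2t j)).mp hle
  linarith

set_option maxHeartbeats 1600000 in
/-- all the `ā_i` (1-based indexing, with `v̄_0 := 0`, `v̄_{n+3} := 0`)
are bounded above by `q̄ = 2 σ̄^{-2/3} λ̄_0^{-1/3}`. -/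
theorem stmt_10 (n : ℕ) (hn : 1 ≤ n) (l : Fin (n+1) → ℝ)
    (hmin : IsMinimizer n l) (v : Fin (n+2) → ℝ) (hv : IsPerronVector n l v)
    (ve : ℕ → ℝ) (hve0 : ve 0 = 0) (hveTop : ve (n+3) = 0)
    (hve : ∀ j : Fin (n+2), ve ((j : ℕ) + 1) = v j)
    (a : ℕ → ℝ) (ha : ∀ i, i ≤ n+3 → a i = (ve i / ve 1) ^ ((2:ℝ)/3))
    (q : ℝ)
    (hq : q = 2 * sigmaB n l ^ (-(2:ℝ)/3) * l 0 ^ (-(1:ℝ)/3)) :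
    ∀ i : ℕ, i ≤ n+3 → a i < q := by
  classical
  have hlpos : ∀ i, 0 < l i := hmin.1.1
  have hv0 : ∀ j, 0 < v j := hv.1
  have hnorm := hv.2.1
  have hBv := hv.2.2
  -- ve facts
  have hveval : ∀ i, 1 ≤ i → (h2 : i ≤ n+2) → ve i = v ⟨i-1, by omega⟩ := by
    intro i h1 h2
    have h := hve ⟨i-1, by omega⟩
    rw [show i-1+1 = i by omega] at h
    exact h
  have hvepos : ∀ i, 1 ≤ i → i ≤ n+2 → 0 < ve i := by
    intro i h1 h2
    rw [hveval i h1 h2]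
    exact hv0 _
  have hvenn : ∀ i, i ≤ n+3 → 0 ≤ ve i := by
    intro i hi
    by_cases h0 : i = 0
    · rw [h0, hve0]
    · by_cases ht : i = n+3
      · rw [ht, hveTop]
      · exact (hvepos i (by omega) (by omega)).le
  have hvcast : ∀ (x y : ℕ) (hx : x < n+2) (hy : y < n+2), x = y → v ⟨x,hx⟩ = v ⟨y,hy⟩ := by
    intro x y hx hy h
    subst h
    rfl
  -- row 0 of the eigen equation
  have hrow0 := congrFun hBv ⟨0, by omega⟩
  rw [S10.mulVec_apply] at hrow0
  rw [dif_neg (by simp), dif_pos (by simp)] at hrow0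
  simp only [Pi.smul_apply, smul_eq_mul] at hrow0
  have hσpos : 0 < sigmaB n l := by
    have h1 : 0 < l ⟨0, by omega⟩ ^ (-(1/2):ℝ) := rpow_pos_of_pos (hlpos _) _
    have h2 := hv0 (⟨0+1, by omega⟩ : Fin (n+2))
    have h3 := hv0 (⟨0, by omega⟩ : Fin (n+2))
    by_contra hcneg
    push_neg at hcneg
    nlinarith [hrow0, mul_pos h1 h2, mul_nonneg (neg_nonneg.mpr hcneg) h3.le]
  -- KKT
  set c := l ⟨0, by omega⟩ ^ (-(3:ℝ)/2) * v ⟨0, by omega⟩ * v ⟨1, by omega⟩ with hcdef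
  have hcpos : 0 < c :=
    mul_pos (mul_pos (rpow_pos_of_pos (hlpos _) _) (hv0 _)) (hv0 _)
  have hkkt2 : ∀ a', 1 ≤ a' → (ha2 : a' ≤ n+1) →
      l ⟨a'-1, by omega⟩ ^ (-(3:ℝ)/2) * ve a' * ve (a'+1) = c := by
    intro a' ha1 ha2
    have hk1 := S10.kkt n l hmin v hv ⟨a'-1, by omega⟩ ⟨0, by omega⟩
    have hk2 := S10.kkt n l hmin v hv ⟨0, by omega⟩ ⟨a'-1, by omega⟩
    have hk : l ⟨a'-1, by omega⟩ ^ (-(3:ℝ)/2) * v ⟨a'-1, by omega⟩ * v ⟨a'-1+1, by omega⟩ = c :=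
      le_antisymm hk1 hk2
    rw [show ve a' = v ⟨a'-1, by omega⟩ from hveval a' ha1 (by omega),
      show ve (a'+1) = v ⟨a'+1-1, by omega⟩ from hveval (a'+1) (by omega) (by omega),
      hvcast (a'+1-1) (a'-1+1) (by omega) (by omega) (by omega)]
    exact hk
  have hLinvVe : ∀ a', 1 ≤ a' → (ha2 : a' ≤ n+1) →
      l ⟨a'-1, by omega⟩ ^ (-(1/2):ℝ) = c ^ ((1:ℝ)/3) * (ve a' * ve (a'+1)) ^ (-(1:ℝ)/3) := by
    intro a' ha1 ha2
    exact S10.linv _ _ _ _ (hlpos _) (hvepos a' ha1 (by omega)) (hvepos (a'+1) (by omega) (by omega))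
      hcpos (hkkt2 a' ha1 ha2)
  -- eigen equations in ve form
  have heigen : ∀ i, 1 ≤ i → (hi : i ≤ n+2) → sigmaB n l * ve i
      = (if h : 2 ≤ i then l ⟨i-1-1, by omega⟩ ^ (-(1/2):ℝ) * ve (i-1) else 0)
      + (if h : i ≤ n+1 then l ⟨i-1, by omega⟩ ^ (-(1/2):ℝ) * ve (i+1) else 0) := by
    intro i h1 hi
    have hrow := congrFun hBv ⟨i-1, by omega⟩
    rw [S10.mulVec_apply] at hrow
    simp only [Pi.smul_apply, smul_eq_mul] at hrow
    rw [hveval i h1 hi, ← hrow]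
    congr 1
    · by_cases h2 : 2 ≤ i
      · rw [dif_pos (by omega : 0 < i-1), dif_pos h2, hveval (i-1) (by omega) (by omega)]
      · rw [dif_neg (by omega : ¬ 0 < i-1), dif_neg h2]
    · by_cases h3 : i ≤ n+1
      · rw [dif_pos (by omega : i-1 < n+1), dif_pos h3, hveval (i+1) (by omega) (by omega),
          hvcast (i+1-1) (i-1+1) (by omega) (by omega) (by omega)]
      · rw [dif_neg (by omega : ¬ i-1 < n+1), dif_neg h3]
  -- s and K
  set s : ℕ → ℝ := fun i => ve i ^ ((2:ℝ)/3) with hsdef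
  set K := sigmaB n l * c ^ (-(1:ℝ)/3) with hKdef
  have hKpos : 0 < K := mul_pos hσpos (rpow_pos_of_pos hcpos _)
  have hs0 : s 0 = 0 := by
    show ve 0 ^ ((2:ℝ)/3) = 0
    rw [hve0]
    exact Real.zero_rpow (by norm_num)
  have hstop : s (n+3) = 0 := by
    show ve (n+3) ^ ((2:ℝ)/3) = 0
    rw [hveTop]
    exact Real.zero_rpow (by norm_num)
  have hspos : ∀ i, 1 ≤ i → i ≤ n+2 → 0 < s i := fun i h1 h2 =>
    rpow_pos_of_pos (hvepos i h1 h2) _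
  -- the recursion
  have hrec : ∀ i, 1 ≤ i → i ≤ n+2 → s (i-1) + s (i+1) = K * s i ^ 2 := by
    intro i h1 h2
    have hE := heigen i h1 h2
    by_cases hA : 2 ≤ i <;> by_cases hB : i ≤ n+1
    · rw [dif_pos hA, dif_pos hB, hLinvVe (i-1) (by omega) (by omega),
        show i-1+1 = i by omega, hLinvVe i h1 hB] at hE
      exact S10.recursion_mid (sigmaB n l) c (ve (i-1)) (ve i) (ve (i+1)) hcpos
        (hvepos (i-1) (by omega) (by omega)) (hvepos i h1 h2)
        (hvepos (i+1) (by omega) (by omega)) hE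
    · -- i = n+2
      rw [dif_pos hA, dif_neg hB, add_zero, hLinvVe (i-1) (by omega) (by omega),
        show i-1+1 = i by omega] at hE
      have hr := S10.recursion_right (sigmaB n l) c (ve (i-1)) (ve i) hcpos
        (hvepos (i-1) (by omega) (by omega)) (hvepos i h1 h2) hE
      have hieq : i = n+2 := by omega
      subst hieq
      rw [show n+2+1 = n+3 by omega, hstop, add_zero]
      exact hr
    · -- i = 1
      rw [dif_neg hA, dif_pos hB, zero_add, hLinvVe i h1 hB] at hE
      have hr := S10.recursion_left (sigmaB n l) c (ve i) (ve (i+1)) hcpos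
        (hvepos i h1 h2) (hvepos (i+1) (by omega) (by omega)) hE
      have hieq : i = 1 := by omega
      subst hieq
      rw [show (1:ℕ)-1 = 0 by norm_num, hs0, zero_add]
      exact hr
    · omega
  -- maximum of s
  obtain ⟨k, hkmem, hkmax⟩ := Finset.exists_max_image (Finset.range (n+4)) s ⟨0, by simp⟩
  have hkmax' : ∀ i, i ≤ n+3 → s i ≤ s k := fun i hi =>
    hkmax i (Finset.mem_range.mpr (by omega))
  have hs1pos : 0 < s 1 := hspos 1 (le_refl _) (by omega)
  have hMpos : 0 < s k := lt_of_lt_of_le hs1pos (hkmax' 1 (by omega))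
  have hk1 : 1 ≤ k := by
    by_contra hc'
    push_neg at hc'
    have : k = 0 := by omega
    rw [this, hs0] at hMpos
    exact lt_irrefl _ hMpos
  have hk2 : k ≤ n+2 := by
    by_contra hc'
    push_neg at hc'
    have hkk : k = n+3 := by
      have := Finset.mem_range.mp hkmem
      omega
    rw [hkk, hstop] at hMpos
    exact lt_irrefl _ hMpos
  have hKM : K * s k ≤ 2 := by
    have hrk := hrec k hk1 hk2
    have h1 : s (k-1) ≤ s k := hkmax' _ (by omega)
    have h2 : s (k+1) ≤ s k := hkmax' _ (by omega)
    nlinarith [hrk, hMpos]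
  have hKMlt : K * s k < 2 := by
    rcases lt_or_eq_of_le hKM with h | h
    · exact h
    · exfalso
      have hprop : ∀ d, k + d ≤ n+3 → s (k+d) = s k := by
        intro d
        induction d with
        | zero => intro _; rfl
        | succ d ih =>
          intro hd
          have hkd := ih (by omega)
          have hrj := hrec (k+d) (by omega) (by omega)
          have hle1 : s (k+d-1) ≤ s k := hkmax' _ (by omega)
          have hle2 : s (k+d+1) ≤ s k := hkmax' _ (by omega)
          have hKsk : K * s (k+d) ^ 2 = 2 * s k := by
            rw [hkd]
            nlinarith [h]
          have : s (k+d+1) = s k := le_antisymm hle2 (by nlinarith [hrj, hle1, hKsk])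
          rw [show k+(d+1) = k+d+1 by omega]
          exact this
      have hfin := hprop (n+3-k) (by omega)
      rw [show k+(n+3-k) = n+3 by omega, hstop] at hfin
      exact absurd hfin.symm (ne_of_gt hMpos)
  -- translate row 0
  have hrow0' : l ⟨0, by omega⟩ ^ (-(1/2):ℝ) * ve 2 = sigmaB n l * ve 1 := by
    have e1 : ve 1 = v ⟨0, by omega⟩ := hveval 1 (le_refl _) (by omega)
    have e2 : ve 2 = v ⟨0+1, by omega⟩ := hveval 2 (by omega) (by omega)
    rw [e1, e2]
    linarith [hrow0]
  have hceq : c = l ⟨0, by omega⟩ ^ (-(3:ℝ)/2) * ve 1 * ve 2 := by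
    have e1 : ve 1 = v ⟨0, by omega⟩ := hveval 1 (le_refl _) (by omega)
    have e2 : ve 2 = v ⟨1, by omega⟩ := hveval 2 (by omega) (by omega)
    rw [e1, e2]
  have hKs1 : K * s 1 = sigmaB n l ^ ((2:ℝ)/3) * l ⟨0, by omega⟩ ^ ((1:ℝ)/3) := by
    have hks := S10.Ks1 (sigmaB n l) (l ⟨0, by omega⟩) (ve 1) (ve 2) hσpos (hlpos _)
      (hvepos 1 (le_refl _) (by omega)) (hvepos 2 (by omega) (by omega)) hrow0'
    have hstep : K * s 1 = (sigmaB n l * (l ⟨0, by omega⟩ ^ (-(3:ℝ)/2) * ve 1 * ve 2) ^ (-(1:ℝ)/3)) * ve 1 ^ ((2:ℝ)/3) := by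
      rw [hKdef, ← hceq]
    exact hstep.trans hks
  have hl00 : l ⟨0, by omega⟩ = l 0 := by congr 1
  rw [hl00] at hKs1
  have hq2 : q * (K * s 1) = 2 := by
    rw [hq, hKs1]
    have c1 : sigmaB n l ^ ((2:ℝ)/3) * sigmaB n l ^ (-(2:ℝ)/3) = 1 := by
      rw [show (-(2:ℝ)/3) = -((2:ℝ)/3) by norm_num]
      exact S10.rpow_can hσpos _
    have c2 : l 0 ^ ((1:ℝ)/3) * l 0 ^ (-(1:ℝ)/3) = 1 := by
      rw [show (-(1:ℝ)/3) = -((1:ℝ)/3) by norm_num]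
      exact S10.rpow_can (hlpos 0) _
    calc 2 * sigmaB n l ^ (-(2:ℝ)/3) * l 0 ^ (-(1:ℝ)/3)
          * (sigmaB n l ^ ((2:ℝ)/3) * l 0 ^ ((1:ℝ)/3))
        = 2 * (sigmaB n l ^ ((2:ℝ)/3) * sigmaB n l ^ (-(2:ℝ)/3))
          * (l 0 ^ ((1:ℝ)/3) * l 0 ^ (-(1:ℝ)/3)) := by ring
      _ = 2 := by rw [c1, c2]; ring
  -- conclusion
  intro i hi
  have hai : a i = s i / s 1 := by
    rw [ha i hi]
    show (ve i / ve 1) ^ ((2:ℝ)/3) = ve i ^ ((2:ℝ)/3) / ve 1 ^ ((2:ℝ)/3)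
    exact Real.div_rpow (hvenn i hi) (hvenn 1 (by omega)) _
  have hKs1pos : 0 < K * s 1 := mul_pos hKpos hs1pos
  have hqval : q = 2 / (K * s 1) := by
    rw [eq_div_iff hKs1pos.ne']
    exact hq2
  rw [hai, hqval, div_lt_div_iff₀ hs1pos hKs1pos]
  have h1 : s i ≤ s k := hkmax' i hi
  nlinarith [hKMlt, h1, hKpos, hs1pos, mul_le_mul_of_nonneg_left h1 hKpos.le]
end

section
/- Let n ∈ ℕ with n ≥ 1, let λ̄ be a minimizer of σ(B(·)) over Λ_n with σ̄ = σ(B(λ̄)), let v̄ be a Perron vector of B(λ̄), set v̄_0 := 0, ā_i := (v̄_i/v̄_1)^{2/3} for i = 0,…,n+2, and define r̄ := σ̄^{2/3} λ̄_0^{1/3} and q̄ := 2/r̄. Then ā_0 < ā_1 < ā_2 < … < ā_{⌊(n+3)/2⌋} < q̄; moreover r̄ < √2 and q̄ > √2. -/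
open Real

namespace Stmt11Aux

/-- zero-padded extension of a `Fin`-indexed family -/
def pad (n : ℕ) (f : Fin n → ℝ) : ℕ → ℝ := fun i => if h : i < n then f ⟨i, h⟩ else 0

lemma pad_lt (n : ℕ) (f : Fin n → ℝ) (i : ℕ) (h : i < n) : pad n f i = f ⟨i, h⟩ := dif_pos h

lemma pad_ge (n : ℕ) (f : Fin n → ℝ) (i : ℕ) (h : n ≤ i) : pad n f i = 0 := dif_neg (by omega)

/-- general symmetric tridiagonal matrix with zero diagonal -/
noncomputable def TriM (n : ℕ) (g : Fin (n+1) → ℝ) :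
    Matrix (Fin (n+2)) (Fin (n+2)) ℝ :=
  Matrix.of fun i j =>
    if h1 : (i : ℕ) + 1 = (j : ℕ) then
      g ⟨(i : ℕ), by have := j.isLt; omega⟩
    else if h2 : (j : ℕ) + 1 = (i : ℕ) then
      g ⟨(j : ℕ), by have := i.isLt; omega⟩
    else 0

lemma Bmat_eq_TriM (n : ℕ) (l : Fin (n+1) → ℝ) :
    Bmat n l = TriM n (fun k => l k ^ (-(1/2) : ℝ)) := rfl

lemma TriM_apply (n : ℕ) (g : Fin (n+1) → ℝ) (i j : Fin (n+2)) :
    TriM n g i j = (if (i:ℕ)+1 = (j:ℕ) then pad (n+1) g (i:ℕ) else 0)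
      + (if (j:ℕ)+1 = (i:ℕ) then pad (n+1) g (j:ℕ) else 0) := by
  show dite _ _ _ = _
  split_ifs with h1 h2 h2'
  · omega
  · rw [pad_lt _ _ _ (by omega), add_zero]
  · rw [pad_lt _ _ _ (by omega), zero_add]
  · norm_num

lemma TriM_symm (n : ℕ) (g : Fin (n+1) → ℝ) (i j : Fin (n+2)) :
    TriM n g i j = TriM n g j i := by
  rw [TriM_apply, TriM_apply]; ring

lemma TriM_nonneg (n : ℕ) (g : Fin (n+1) → ℝ) (hg : ∀ k, 0 ≤ g k) (i j : Fin (n+2)) :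
    0 ≤ TriM n g i j := by
  rw [TriM_apply]
  have hp : ∀ m : ℕ, 0 ≤ pad (n+1) g m := by
    intro m; unfold pad; split_ifs; exacts [hg _, le_rfl]
  split_ifs <;> linarith [hp (i:ℕ), hp (j:ℕ)]

lemma sum_single_coe {N : ℕ} (c : ℕ) (F : Fin N → ℝ) :
    (∑ j : Fin N, if c = (j : ℕ) then F j else 0) = if h : c < N then F ⟨c, h⟩ else 0 := by
  by_cases h : c < N
  · rw [dif_pos h]
    rw [Finset.sum_eq_single (⟨c, h⟩ : Fin N)]
    · simp
    · intro j _ hj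
      rw [if_neg]
      intro hc
      exact hj (by apply Fin.ext; simp [← hc])
    · intro hj; exact absurd (Finset.mem_univ _) hj
  · rw [dif_neg h]
    apply Finset.sum_eq_zero
    intro j _
    rw [if_neg]
    have := j.isLt
    omega

lemma TriM_mulVec (n : ℕ) (g : Fin (n+1) → ℝ) (u : Fin (n+2) → ℝ) (i : Fin (n+2)) :
    (TriM n g).mulVec u i
      = (if (i:ℕ) = 0 then 0 else 1) * (pad (n+1) g ((i:ℕ)-1) * pad (n+2) u ((i:ℕ)-1))
        + pad (n+1) g (i:ℕ) * pad (n+2) u ((i:ℕ)+1) := by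
  unfold Matrix.mulVec dotProduct
  have expand : ∀ j : Fin (n+2), TriM n g i j * u j
      = (if (i:ℕ)+1 = (j:ℕ) then pad (n+1) g (i:ℕ) * u j else 0)
        + (if (j:ℕ)+1 = (i:ℕ) then pad (n+1) g (j:ℕ) * u j else 0) := by
    intro j
    rw [TriM_apply, add_mul]
    congr 1 <;> (split_ifs <;> ring)
  rw [Finset.sum_congr rfl (fun j _ => expand j), Finset.sum_add_distrib]
  have S1 : (∑ j : Fin (n+2), if (i:ℕ)+1 = (j:ℕ) then pad (n+1) g (i:ℕ) * u j else 0)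
      = pad (n+1) g (i:ℕ) * pad (n+2) u ((i:ℕ)+1) := by
    rw [sum_single_coe ((i:ℕ)+1) (fun j => pad (n+1) g (i:ℕ) * u j)]
    by_cases h : (i:ℕ)+1 < n+2
    · rw [dif_pos h, pad_lt _ _ _ h]
    · rw [dif_neg h, pad_ge _ _ _ (by omega), pad_ge _ _ _ (by omega), zero_mul]
  have S2 : (∑ j : Fin (n+2), if (j:ℕ)+1 = (i:ℕ) then pad (n+1) g (j:ℕ) * u j else 0)
      = (if (i:ℕ) = 0 then 0 else 1) * (pad (n+1) g ((i:ℕ)-1) * pad (n+2) u ((i:ℕ)-1)) := by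
    rcases Nat.eq_zero_or_pos (i:ℕ) with h0 | h0
    · rw [if_pos h0, zero_mul]
      apply Finset.sum_eq_zero
      intro j _
      rw [if_neg (by omega)]
    · obtain ⟨m, hm⟩ : ∃ m, (i:ℕ) = m + 1 := ⟨(i:ℕ)-1, by omega⟩
      have hcond : ∀ j : Fin (n+2), ((j:ℕ)+1 = (i:ℕ)) ↔ (m = (j:ℕ)) := by
        intro j; omega
      rw [Finset.sum_congr rfl (fun j _ => by rw [if_congr (hcond j) rfl rfl])]
      rw [sum_single_coe m (fun j => pad (n+1) g (j:ℕ) * u j)]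
      have hmlt : m < n + 2 := by have := i.isLt; omega
      rw [dif_pos hmlt, if_neg (by omega), one_mul, hm]
      simp only [Nat.add_sub_cancel]
      rw [pad_lt (n+2) u m hmlt]
  rw [S1, S2]
  ring

end Stmt11Aux


namespace Stmt11Aux

lemma rows_of_eig (n : ℕ) (g : Fin (n+1) → ℝ) (x : Fin (n+2) → ℝ) (μ : ℝ)
    (h : (TriM n g).mulVec x = μ • x) :
    (pad (n+1) g 0 * pad (n+2) x 1 = μ * pad (n+2) x 0) ∧
    (∀ i : ℕ, pad (n+1) g i * pad (n+2) x i + pad (n+1) g (i+1) * pad (n+2) x (i+2)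
      = μ * pad (n+2) x (i+1)) := by
  constructor
  · have h0 := congrFun h (0 : Fin (n+2))
    rw [TriM_mulVec] at h0
    simp only [Pi.smul_apply, smul_eq_mul] at h0
    norm_num at h0
    rw [pad_lt (n+2) x 0 (by omega)]
    exact h0
  · intro i
    by_cases hi : i + 1 < n + 2
    · have hI := congrFun h (⟨i+1, hi⟩ : Fin (n+2))
      rw [TriM_mulVec] at hI
      simp only [Pi.smul_apply, smul_eq_mul] at hI
      norm_num at hI
      rw [pad_lt (n+2) x (i+1) hi]
      convert hI using 3 <;> omega
    · rw [pad_ge (n+1) g i (by omega), pad_ge (n+1) g (i+1) (by omega),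
        pad_ge (n+2) x (i+1) (by omega)]
      ring

lemma sigmaB_le_of_subinvariant (n : ℕ) (m : Fin (n+1) → ℝ) (hm : ∀ k, 0 < m k)
    (w : Fin (n+2) → ℝ) (hw : ∀ i, 0 < w i) (κ : ℝ) (hκ : 0 ≤ κ)
    (hsub : ∀ i, (Bmat n m).mulVec w i ≤ κ * w i) : sigmaB n m ≤ κ := by
  apply Real.sSup_le _ hκ
  rintro μ ⟨u, hu0, huμ⟩
  rcases le_or_gt μ 0 with hμ | hμ
  · linarith
  have hBnn : ∀ i j : Fin (n+2), 0 ≤ Bmat n m i j := by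
    intro i j
    rw [Bmat_eq_TriM]
    exact TriM_nonneg n _ (fun k => Real.rpow_nonneg (le_of_lt (hm k)) _) i j
  have hBsymm : ∀ i j : Fin (n+2), Bmat n m i j = Bmat n m j i := by
    intro i j; rw [Bmat_eq_TriM]; exact TriM_symm n _ i j
  set T := ∑ i, w i * |u i| with hT
  have hTpos : 0 < T := by
    obtain ⟨i0, hi0⟩ := Function.ne_iff.mp hu0
    apply Finset.sum_pos' (fun i _ => mul_nonneg (hw i).le (abs_nonneg _))
    exact ⟨i0, Finset.mem_univ _, mul_pos (hw i0) (abs_pos.mpr hi0)⟩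
  have h1 : ∀ i, μ * |u i| ≤ ∑ j, Bmat n m i j * |u j| := by
    intro i
    have e1 : μ * |u i| = |(Bmat n m).mulVec u i| := by
      rw [huμ]
      simp only [Pi.smul_apply, smul_eq_mul, abs_mul, abs_of_pos hμ]
    rw [e1]
    unfold Matrix.mulVec dotProduct
    calc |∑ j, Bmat n m i j * u j| ≤ ∑ j, |Bmat n m i j * u j| :=
          Finset.abs_sum_le_sum_abs _ _
      _ = ∑ j, Bmat n m i j * |u j| := by
          apply Finset.sum_congr rfl
          intro j _
          rw [abs_mul, abs_of_nonneg (hBnn i j)]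
  have h2 : μ * T ≤ ∑ i, w i * (∑ j, Bmat n m i j * |u j|) := by
    rw [hT, Finset.mul_sum]
    apply Finset.sum_le_sum
    intro i _
    have := h1 i
    have hwi := (hw i).le
    nlinarith [hw i]
  have h3 : (∑ i, w i * (∑ j, Bmat n m i j * |u j|)) ≤ κ * T := by
    have swap : (∑ i, w i * (∑ j, Bmat n m i j * |u j|))
        = ∑ j, ((Bmat n m).mulVec w j) * |u j| := by
      simp_rw [Finset.mul_sum]
      rw [Finset.sum_comm]
      apply Finset.sum_congr rfl
      intro j _
      unfold Matrix.mulVec dotProduct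
      rw [Finset.sum_mul]
      apply Finset.sum_congr rfl
      intro i _
      rw [hBsymm i j]; ring
    rw [swap, hT, Finset.mul_sum]
    apply Finset.sum_le_sum
    intro j _
    have := hsub j
    have : (Bmat n m).mulVec w j * |u j| ≤ κ * w j * |u j| := by
      apply mul_le_mul_of_nonneg_right _ (abs_nonneg _)
      linarith [hsub j]
    linarith [this]
  have := le_trans h2 h3
  exact le_of_mul_le_mul_right (by linarith) hTpos

end Stmt11Aux

namespace Stmt11Aux

lemma ker_char (n : ℕ) (l : Fin (n+1) → ℝ) (hl : ∀ k, 0 < l k) (σ : ℝ)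
    (v : Fin (n+2) → ℝ) (hvpos : ∀ i, 0 < v i)
    (hveig : (Bmat n l).mulVec v = σ • v)
    (x : Fin (n+2) → ℝ) (hx : (Bmat n l).mulVec x = σ • x) :
    ∀ i : Fin (n+2), v 0 * x i = x 0 * v i := by
  set g : Fin (n+1) → ℝ := fun k => l k ^ (-(1/2) : ℝ) with hg
  have hgpos : ∀ k, 0 < g k := fun k => Real.rpow_pos_of_pos (hl k) _
  have hpgpos : ∀ i : ℕ, i < n + 1 → 0 < pad (n+1) g i := by
    intro i hi; rw [pad_lt _ _ _ hi]; exact hgpos _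
  rw [Bmat_eq_TriM] at hveig hx
  obtain ⟨hv0, hvrow⟩ := rows_of_eig n g v σ hveig
  obtain ⟨hx0, hxrow⟩ := rows_of_eig n g x σ hx
  set PV := pad (n+2) v with hPV
  set PX := pad (n+2) x with hPX
  have key : ∀ i : ℕ, PV 0 * PX i = PX 0 * PV i := by
    intro i
    induction i using Nat.strong_induction_on with
    | _ i ih =>
      match i with
      | 0 => ring
      | 1 =>
        have hg0 : 0 < pad (n+1) g 0 := hpgpos 0 (by omega)
        have e1 := hv0
        have e2 := hx0
        have : pad (n+1) g 0 * (PV 0 * PX 1) = pad (n+1) g 0 * (PX 0 * PV 1) := by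
          linear_combination PV 0 * e2 - PX 0 * e1
        exact mul_left_cancel₀ (ne_of_gt hg0) this
      | (m+2) =>
        by_cases hm : m + 2 < n + 2
        · have hgm : 0 < pad (n+1) g (m+1) := hpgpos (m+1) (by omega)
          have e1 := hvrow m
          have e2 := hxrow m
          have i1 := ih m (by omega)
          have i2 := ih (m+1) (by omega)
          have : pad (n+1) g (m+1) * (PV 0 * PX (m+2))
              = pad (n+1) g (m+1) * (PX 0 * PV (m+2)) := by
            linear_combination PV 0 * e2 - PX 0 * e1 - pad (n+1) g m * i1 + σ * i2
          exact mul_left_cancel₀ (ne_of_gt hgm) this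
        · rw [show PX (m+2) = 0 from pad_ge _ _ _ (by omega),
            show PV (m+2) = 0 from pad_ge _ _ _ (by omega)]
          ring
  intro i
  have := key (i : ℕ)
  rw [hPV, hPX, pad_lt (n+2) v (i:ℕ) i.isLt, pad_lt (n+2) x (i:ℕ) i.isLt,
    pad_lt (n+2) v 0 (by omega), pad_lt (n+2) x 0 (by omega)] at this
  simpa using this

lemma solve_shifted (n : ℕ) (l : Fin (n+1) → ℝ) (hl : ∀ k, 0 < l k) (σ : ℝ)
    (v : Fin (n+2) → ℝ) (hvpos : ∀ i, 0 < v i)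
    (hveig : (Bmat n l).mulVec v = σ • v)
    (y : Fin (n+2) → ℝ) (hy : ∑ i, v i * y i = 0) :
    ∃ η : Fin (n+2) → ℝ, (Bmat n l).mulVec η - σ • η = y := by
  classical
  set M : Matrix (Fin (n+2)) (Fin (n+2)) ℝ := Bmat n l - σ • 1 with hM
  have hMapp : ∀ x, M.mulVec x = (Bmat n l).mulVec x - σ • x := by
    intro x
    rw [hM, Matrix.sub_mulVec, Matrix.smul_mulVec, Matrix.one_mulVec]
  set T := M.mulVecLin with hT
  have hTapp : ∀ x, T x = (Bmat n l).mulVec x - σ • x := fun x => hMapp x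
  have hvne : v ≠ 0 := by
    intro h
    have := hvpos 0
    rw [h] at this
    simp at this
  -- kernel of T is the span of v
  have hker : LinearMap.ker T = Submodule.span ℝ {v} := by
    apply le_antisymm
    · intro x hx
      rw [LinearMap.mem_ker] at hx
      have heig : (Bmat n l).mulVec x = σ • x := by
        have := hTapp x
        rw [hx] at this
        have := this.symm
        rw [sub_eq_zero] at this
        exact this
      have hchar := ker_char n l hl σ v hvpos hveig x heig
      rw [Submodule.mem_span_singleton]
      refine ⟨x 0 / v 0, ?_⟩
      funext i
      have h0 : v 0 ≠ 0 := ne_of_gt (hvpos 0)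
      have := hchar i
      rw [Pi.smul_apply, smul_eq_mul, div_mul_eq_mul_div, div_eq_iff h0]
      linear_combination -this
    · rw [Submodule.span_le]
      intro x hx
      rw [Set.mem_singleton_iff] at hx
      subst hx
      rw [SetLike.mem_coe, LinearMap.mem_ker, hTapp, hveig, sub_self]
  -- the functional x ↦ ⟨v, x⟩
  set f : (Fin (n+2) → ℝ) →ₗ[ℝ] ℝ :=
    { toFun := fun x => ∑ i, v i * x i
      map_add' := by
        intro x y; simp [mul_add, Finset.sum_add_distrib]
      map_smul' := by
        intro c x
        simp [Finset.mul_sum]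
        apply Finset.sum_congr rfl
        intro i _; ring } with hf
  have hfsurj : LinearMap.range f = ⊤ := by
    rw [LinearMap.range_eq_top]
    intro c
    refine ⟨fun i => c * v i / (∑ i, v i ^ 2), ?_⟩
    have hs : (∑ i, v i ^ 2) ≠ 0 := by
      apply ne_of_gt
      apply Finset.sum_pos' (fun i _ => sq_nonneg _)
      exact ⟨0, Finset.mem_univ _, pow_pos (hvpos 0) 2⟩
    show (∑ i, v i * (c * v i / (∑ i, v i ^ 2))) = c
    have : (∑ i, v i * (c * v i / (∑ i, v i ^ 2)))
        = (∑ i, c * v i ^ 2) / (∑ i, v i ^ 2) := by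
      rw [Finset.sum_div]
      apply Finset.sum_congr rfl
      intro i _; field_simp
    rw [this, ← Finset.mul_sum, mul_div_assoc, div_self hs, mul_one]
  have hdim : Module.finrank ℝ (Fin (n+2) → ℝ) = n + 2 := by
    rw [Module.finrank_fintype_fun_eq_card, Fintype.card_fin]
  have hkerf : Module.finrank ℝ (LinearMap.ker f) = n + 1 := by
    have := LinearMap.finrank_range_add_finrank_ker f
    rw [hfsurj, hdim] at this
    simp [Module.finrank_self] at this
    omega
  have hrange : Module.finrank ℝ (LinearMap.range T) = n + 1 := by
    have := LinearMap.finrank_range_add_finrank_ker T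
    rw [hker, hdim, finrank_span_singleton hvne] at this
    omega
  have hle : LinearMap.range T ≤ LinearMap.ker f := by
    rintro z ⟨x, rfl⟩
    rw [LinearMap.mem_ker]
    show (∑ i, v i * (T x) i) = 0
    -- v ⬝ (B x - σ x) = (B v - σ v) ⬝ x = 0, by symmetry of B
    have hsymm : ∀ i j, Bmat n l i j = Bmat n l j i := by
      intro i j; rw [Bmat_eq_TriM]; exact TriM_symm n _ i j
    have e0 : ∀ i, (T x) i = (Bmat n l).mulVec x i - σ * x i := by
      intro i; rw [hTapp x]; simp [Pi.smul_apply]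
    have swap : (∑ i, v i * (Bmat n l).mulVec x i) = ∑ j, ((Bmat n l).mulVec v) j * x j := by
      unfold Matrix.mulVec dotProduct
      simp_rw [Finset.mul_sum]
      rw [Finset.sum_comm]
      apply Finset.sum_congr rfl
      intro j _
      rw [Finset.sum_mul]
      apply Finset.sum_congr rfl
      intro i _
      rw [hsymm i j]; ring
    calc (∑ i, v i * (T x) i)
        = ∑ i, (v i * (Bmat n l).mulVec x i - σ * (v i * x i)) := by
          apply Finset.sum_congr rfl; intro i _; rw [e0]; ring
      _ = (∑ i, v i * (Bmat n l).mulVec x i) - σ * ∑ i, v i * x i := by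
          rw [Finset.sum_sub_distrib, Finset.mul_sum]
      _ = 0 := by
          rw [swap, hveig, Finset.mul_sum, sub_eq_zero]
          apply Finset.sum_congr rfl
          intro j _
          simp only [Pi.smul_apply, smul_eq_mul]
          ring
  have heq : LinearMap.range T = LinearMap.ker f :=
    Submodule.eq_of_le_of_finrank_eq hle (by rw [hrange, hkerf])
  have hy' : y ∈ LinearMap.ker f := by rw [LinearMap.mem_ker]; exact hy
  rw [← heq] at hy'
  obtain ⟨η, hη⟩ := hy'
  exact ⟨η, by rw [← hTapp η]; exact hη⟩

end Stmt11Aux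

namespace Stmt11Aux

lemma padg_hasDeriv (n : ℕ) (l δ : Fin (n+1) → ℝ) (hl : ∀ k, 0 < l k) (m : ℕ) :
    HasDerivAt (fun t : ℝ => pad (n+1) (fun k => (l k + t * δ k) ^ (-(1/2) : ℝ)) m)
      (pad (n+1) (fun k => -(1/2) * l k ^ (-(3:ℝ)/2) * δ k) m) 0 := by
  by_cases hm : m < n + 1
  · have e1 : ∀ t : ℝ, pad (n+1) (fun k => (l k + t * δ k) ^ (-(1/2) : ℝ)) m
        = (l ⟨m, hm⟩ + t * δ ⟨m, hm⟩) ^ (-(1/2) : ℝ) := fun t => pad_lt _ _ _ hm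
    simp only [e1, pad_lt _ _ _ hm]
    have hin : HasDerivAt (fun t : ℝ => l ⟨m, hm⟩ + t * δ ⟨m, hm⟩) (δ ⟨m, hm⟩) 0 := by
      simpa using (((hasDerivAt_id (0:ℝ)).mul_const (δ ⟨m, hm⟩)).const_add (l ⟨m, hm⟩))
    have hout : HasDerivAt (fun x : ℝ => x ^ (-(1/2) : ℝ))
        ((-(1/2)) * (l ⟨m, hm⟩ + 0 * δ ⟨m, hm⟩) ^ ((-(1/2) : ℝ) - 1)) (l ⟨m, hm⟩ + 0 * δ ⟨m, hm⟩) :=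
      Real.hasDerivAt_rpow_const (Or.inl (by have := hl ⟨m, hm⟩; nlinarith [hl ⟨m, hm⟩]))
    have hc := hout.comp 0 hin
    simp only [zero_mul, add_zero] at hc
    have heq : (-(1/2) : ℝ) * l ⟨m,hm⟩ ^ ((-(1/2):ℝ) - 1) * δ ⟨m,hm⟩
        = -(1/2) * l ⟨m,hm⟩ ^ (-(3:ℝ)/2) * δ ⟨m,hm⟩ := by norm_num
    rw [← heq]
    exact hc
  · have e1 : ∀ t : ℝ, pad (n+1) (fun k => (l k + t * δ k) ^ (-(1/2) : ℝ)) m = 0 :=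
      fun t => pad_ge _ _ _ (by omega)
    simp only [e1, pad_ge _ _ _ (by omega : n + 1 ≤ m)]
    exact hasDerivAt_const 0 0

lemma pad_affine (n : ℕ) (v η : Fin n → ℝ) (t : ℝ) (m : ℕ) :
    pad n (fun j => v j + t * η j) m = pad n v m + t * pad n η m := by
  unfold pad; split_ifs <;> simp

lemma quad_form (n : ℕ) (g : Fin (n+1) → ℝ) (u : Fin (n+2) → ℝ) :
    ∑ i, u i * ((TriM n g).mulVec u) i
      = 2 * ∑ k : Fin (n+1), g k * (u k.castSucc * u k.succ) := by
  have expand : ∀ i : Fin (n+2), u i * ((TriM n g).mulVec u) i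
      = (if (i:ℕ) = 0 then 0 else 1)
          * (pad (n+1) g ((i:ℕ)-1) * pad (n+2) u ((i:ℕ)-1) * u i)
        + pad (n+1) g (i:ℕ) * pad (n+2) u ((i:ℕ)+1) * u i := by
    intro i
    rw [TriM_mulVec]
    ring
  rw [Finset.sum_congr rfl (fun i _ => expand i), Finset.sum_add_distrib]
  have hA : (∑ i : Fin (n+2), pad (n+1) g (i:ℕ) * pad (n+2) u ((i:ℕ)+1) * u i)
      = ∑ k : Fin (n+1), g k * (u k.castSucc * u k.succ) := by
    rw [Fin.sum_univ_castSucc]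
    have hlast : pad (n+1) g ((Fin.last (n+1) : Fin (n+2)):ℕ) = 0 :=
      pad_ge _ _ _ (by simp)
    rw [hlast, zero_mul, zero_mul, add_zero]
    apply Finset.sum_congr rfl
    intro k _
    have hc : ((k.castSucc : Fin (n+2)) : ℕ) = (k : ℕ) := rfl
    rw [hc, pad_lt _ _ _ k.isLt, pad_lt _ _ _ (by omega : (k:ℕ)+1 < n+2)]
    have : (⟨(k:ℕ), k.isLt⟩ : Fin (n+1)) = k := rfl
    rw [this]
    have : (⟨(k:ℕ)+1, by omega⟩ : Fin (n+2)) = k.succ := rfl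
    rw [this]
    ring
  have hB : (∑ i : Fin (n+2), (if (i:ℕ) = 0 then 0 else 1)
        * (pad (n+1) g ((i:ℕ)-1) * pad (n+2) u ((i:ℕ)-1) * u i))
      = ∑ k : Fin (n+1), g k * (u k.castSucc * u k.succ) := by
    rw [Fin.sum_univ_succ]
    rw [show (if ((0 : Fin (n+2)):ℕ) = 0 then (0:ℝ) else 1) = 0 from if_pos rfl, zero_mul, zero_add]
    apply Finset.sum_congr rfl
    intro k _
    have hc : ((k.succ : Fin (n+2)) : ℕ) = (k : ℕ) + 1 := rfl
    rw [hc, if_neg (by omega), Nat.add_sub_cancel, one_mul,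
      pad_lt _ _ _ k.isLt, pad_lt _ _ _ (by omega : (k:ℕ) < n+2)]
    have e1 : (⟨(k:ℕ), k.isLt⟩ : Fin (n+1)) = k := rfl
    have e2 : (⟨(k:ℕ), by omega⟩ : Fin (n+2)) = k.castSucc := rfl
    rw [e1, e2]
    ring
  rw [hA, hB]
  ring

end Stmt11Aux

namespace Stmt11Aux

lemma kkt (n : ℕ) (l : Fin (n+1) → ℝ) (hl : ∀ k, 0 < l k)
    (hminim : ∀ m : Fin (n+1) → ℝ,
      ((∀ i, 0 < m i) ∧ (∑ i, m i) / ((n:ℝ)+1) ≤ 1) → sigmaB n l ≤ sigmaB n m)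
    (hsum : (∑ i, l i) / ((n:ℝ)+1) ≤ 1)
    (v : Fin (n+2) → ℝ) (hvpos : ∀ i, 0 < v i) (hvnorm : (∑ i, v i ^ 2) = 1)
    (hveig : (Bmat n l).mulVec v = sigmaB n l • v) :
    ∀ p p' : Fin (n+1), l p ^ (-(3:ℝ)/2) * (v p.castSucc * v p.succ)
      = l p' ^ (-(3:ℝ)/2) * (v p'.castSucc * v p'.succ) := by
  classical
  set σ := sigmaB n l with hσ
  set wgt : Fin (n+1) → ℝ := fun k => l k ^ (-(3:ℝ)/2) * (v k.castSucc * v k.succ) with hwgt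
  by_contra hcon
  push_neg at hcon
  obtain ⟨p0, p1, hne⟩ := hcon
  -- wlog : wgt p' < wgt p
  obtain ⟨p, p', hW⟩ : ∃ p p', wgt p' < wgt p := by
    rcases lt_or_gt_of_ne hne with h | h
    · exact ⟨p1, p0, h⟩
    · exact ⟨p0, p1, h⟩
  have hpp' : p ≠ p' := fun h => by rw [h] at hW; exact lt_irrefl _ hW
  -- perturbation direction
  set δ : Fin (n+1) → ℝ := fun k => if k = p then 1 else if k = p' then -1 else 0 with hδ
  have hδp : δ p = 1 := by simp [hδ]
  have hδp' : δ p' = -1 := by simp [hδ, hpp'.symm]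
  have hδ0 : ∀ k, k ≠ p → k ≠ p' → δ k = 0 := by
    intro k h1 h2; simp [hδ, h1, h2]
  have hδsum : ∑ k, δ k = 0 := by
    rw [← Finset.sum_subset (Finset.subset_univ ({p, p'} : Finset (Fin (n+1))))
      (fun x _ hx => by
        simp only [Finset.mem_insert, Finset.mem_singleton] at hx
        push_neg at hx
        exact hδ0 x hx.1 hx.2)]
    rw [Finset.sum_pair hpp', hδp, hδp']
    ring
  set d : Fin (n+1) → ℝ := fun k => -(1/2) * l k ^ (-(3:ℝ)/2) * δ k with hd
  set Bd := TriM n d with hBd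
  set c := ∑ i, v i * (Bd.mulVec v) i with hc
  have hcval : c = wgt p' - wgt p := by
    rw [hc, hBd, quad_form]
    have : (∑ k, d k * (v k.castSucc * v k.succ))
        = d p * (v p.castSucc * v p.succ) + d p' * (v p'.castSucc * v p'.succ) := by
      rw [← Finset.sum_subset (Finset.subset_univ ({p, p'} : Finset (Fin (n+1))))
        (fun x _ hx => by
          simp only [Finset.mem_insert, Finset.mem_singleton] at hx
          push_neg at hx
          rw [hd]
          simp only
          rw [hδ0 x hx.1 hx.2]
          ring)]
      rw [Finset.sum_pair hpp']
    rw [this, hd]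
    simp only
    rw [hδp, hδp', hwgt]
    simp only
    ring
  have hcneg : c < 0 := by rw [hcval]; linarith
  set y : Fin (n+2) → ℝ := fun i => c * v i - Bd.mulVec v i with hy
  have hyorth : ∑ i, v i * y i = 0 := by
    rw [hy]
    simp only
    rw [show (∑ i, v i * (c * v i - Bd.mulVec v i))
        = c * (∑ i, v i ^ 2) - ∑ i, v i * (Bd.mulVec v i) by
      rw [Finset.mul_sum, ← Finset.sum_sub_distrib]
      apply Finset.sum_congr rfl
      intro i _; ring]
    rw [hvnorm, ← hc]
    ring
  obtain ⟨η, hη⟩ := solve_shifted n l hl σ v hvpos hveig y hyorth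
  -- the perturbed quantity
  set Φ : Fin (n+2) → ℝ → ℝ := fun i t =>
    (TriM n (fun k => (l k + t * δ k) ^ (-(1/2) : ℝ))).mulVec (fun j => v j + t * η j) i
      - σ * (v i + t * η i) with hΦ
  have hgf0 : (fun k => (l k + 0 * δ k) ^ (-(1/2) : ℝ)) = (fun k => l k ^ (-(1/2) : ℝ)) := by
    funext k; norm_num
  have hΦderiv : ∀ i, HasDerivAt (Φ i) (c * v i) 0 := by
    intro i
    set PG : ℕ → ℝ := pad (n+1) (fun k => l k ^ (-(1/2) : ℝ)) with hPG
    set PD : ℕ → ℝ := pad (n+1) d with hPD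
    set PV : ℕ → ℝ := pad (n+2) v with hPV
    set PH : ℕ → ℝ := pad (n+2) η with hPH
    have hrepr : Φ i = fun t =>
        (if (i:ℕ) = 0 then (0:ℝ) else 1) *
          (pad (n+1) (fun k => (l k + t * δ k) ^ (-(1/2) : ℝ)) ((i:ℕ)-1)
            * (PV ((i:ℕ)-1) + t * PH ((i:ℕ)-1)))
        + pad (n+1) (fun k => (l k + t * δ k) ^ (-(1/2) : ℝ)) (i:ℕ)
            * (PV ((i:ℕ)+1) + t * PH ((i:ℕ)+1))
        - σ * (v i + t * η i) := by
      funext t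
      rw [hΦ]
      simp only
      rw [TriM_mulVec]
      rw [pad_affine, pad_affine]
    rw [hrepr]
    -- derivatives of the pieces
    have hD1 : HasDerivAt (fun t : ℝ =>
        pad (n+1) (fun k => (l k + t * δ k) ^ (-(1/2) : ℝ)) ((i:ℕ)-1)
          * (PV ((i:ℕ)-1) + t * PH ((i:ℕ)-1)))
        (PD ((i:ℕ)-1) * PV ((i:ℕ)-1) + PG ((i:ℕ)-1) * PH ((i:ℕ)-1)) 0 := by
      have ha := padg_hasDeriv n l δ hl ((i:ℕ)-1)
      have hb : HasDerivAt (fun t : ℝ => PV ((i:ℕ)-1) + t * PH ((i:ℕ)-1)) (PH ((i:ℕ)-1)) 0 :=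
        (hasDerivAt_mul_const (PH ((i:ℕ)-1))).const_add (PV ((i:ℕ)-1))
      have := ha.mul hb
      simp only [zero_mul, add_zero, hgf0] at this
      convert this using 1
      all_goals rfl
    have hD2 : HasDerivAt (fun t : ℝ =>
        pad (n+1) (fun k => (l k + t * δ k) ^ (-(1/2) : ℝ)) (i:ℕ)
          * (PV ((i:ℕ)+1) + t * PH ((i:ℕ)+1)))
        (PD (i:ℕ) * PV ((i:ℕ)+1) + PG (i:ℕ) * PH ((i:ℕ)+1)) 0 := by
      have ha := padg_hasDeriv n l δ hl (i:ℕ)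
      have hb : HasDerivAt (fun t : ℝ => PV ((i:ℕ)+1) + t * PH ((i:ℕ)+1)) (PH ((i:ℕ)+1)) 0 :=
        (hasDerivAt_mul_const (PH ((i:ℕ)+1))).const_add (PV ((i:ℕ)+1))
      have := ha.mul hb
      simp only [zero_mul, add_zero, hgf0] at this
      convert this using 1
      all_goals rfl
    have hD3 : HasDerivAt (fun t : ℝ => σ * (v i + t * η i)) (σ * η i) 0 :=
      ((hasDerivAt_mul_const (η i)).const_add (v i)).const_mul σ
    have htot := ((hD1.const_mul ((if (i:ℕ) = 0 then (0:ℝ) else 1))).add hD2).sub hD3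
    convert htot using 1
    · rfl
    · rfl
    · rfl
    -- identify the derivative with c * v i
    have hBdv : Bd.mulVec v i
        = (if (i:ℕ) = 0 then (0:ℝ) else 1) * (PD ((i:ℕ)-1) * PV ((i:ℕ)-1))
          + PD (i:ℕ) * PV ((i:ℕ)+1) := by
      rw [hBd, TriM_mulVec]
    have hBη : (Bmat n l).mulVec η i
        = (if (i:ℕ) = 0 then (0:ℝ) else 1) * (PG ((i:ℕ)-1) * PH ((i:ℕ)-1))
          + PG (i:ℕ) * PH ((i:ℕ)+1) := by
      rw [Bmat_eq_TriM, TriM_mulVec]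
    have hηi := congrFun hη i
    simp only [Pi.sub_apply, Pi.smul_apply, smul_eq_mul] at hηi
    rw [hy] at hηi
    simp only at hηi
    -- hηi : B η i - σ η i = c * v i - Bd v i
    rw [hBdv] at hηi
    rw [hBη] at hηi
    linarith [hηi]
  have hΦ0 : ∀ i, Φ i 0 = 0 := by
    intro i
    rw [hΦ]
    simp only
    rw [hgf0, ← Bmat_eq_TriM]
    have : (fun j => v j + 0 * η j) = v := by funext j; ring
    rw [this, hveig]
    simp
  -- eventually all Φ i t < 0 for small positive t
  have hev1 : ∀ i : Fin (n+2), ∀ᶠ t in nhdsWithin (0:ℝ) (Set.Ioi 0), Φ i t < 0 := by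
    intro i
    have hslope := hasDerivAt_iff_tendsto_slope.mp (hΦderiv i)
    have hcv : c * v i < 0 := mul_neg_of_neg_of_pos hcneg (hvpos i)
    have hev' := hslope.eventually_lt_const hcv
    have hmono : nhdsWithin (0:ℝ) (Set.Ioi 0) ≤ nhdsWithin 0 {(0:ℝ)}ᶜ :=
      nhdsWithin_mono 0 (fun x hx => by
        simp only [Set.mem_compl_iff, Set.mem_singleton_iff]
        exact ne_of_gt hx)
    have hev2 := hev'.filter_mono hmono
    have hself : ∀ᶠ t in nhdsWithin (0:ℝ) (Set.Ioi 0), t ∈ Set.Ioi (0:ℝ) :=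
      eventually_mem_nhdsWithin
    filter_upwards [hev2, hself] with t hs ht
    rw [slope_def_field, hΦ0, sub_zero, sub_zero] at hs
    by_contra hge
    push_neg at hge
    exact absurd hs (not_lt.mpr (div_nonneg hge (le_of_lt ht)))
  have hevΦ : ∀ᶠ t in nhdsWithin (0:ℝ) (Set.Ioi 0), ∀ i, Φ i t < 0 :=
    Filter.eventually_all.mpr hev1
  have hevl : ∀ᶠ t in nhdsWithin (0:ℝ) (Set.Ioi 0), ∀ k, 0 < l k + t * δ k := by
    apply Filter.eventually_all.mpr
    intro k
    have htend : Filter.Tendsto (fun t : ℝ => l k + t * δ k) (nhds 0) (nhds (l k)) := by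
      have hco : Continuous (fun t : ℝ => l k + t * δ k) :=
        continuous_const.add (continuous_id.mul continuous_const)
      have := hco.tendsto 0
      simpa using this
    exact (htend.eventually_const_lt (hl k)).filter_mono nhdsWithin_le_nhds
  have hevv : ∀ᶠ t in nhdsWithin (0:ℝ) (Set.Ioi 0), ∀ i, 0 < v i + t * η i := by
    apply Filter.eventually_all.mpr
    intro i
    have htend : Filter.Tendsto (fun t : ℝ => v i + t * η i) (nhds 0) (nhds (v i)) := by
      have hco : Continuous (fun t : ℝ => v i + t * η i) :=
        continuous_const.add (continuous_id.mul continuous_const)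
      have := hco.tendsto 0
      simpa using this
    exact (htend.eventually_const_lt (hvpos i)).filter_mono nhdsWithin_le_nhds
  obtain ⟨t, hΦt, hlt', hvt⟩ := (hevΦ.and (hevl.and hevv)).exists
  set m : Fin (n+1) → ℝ := fun k => l k + t * δ k with hm
  have hmpos : ∀ k, 0 < m k := hlt'
  have hmsum : (∑ k, m k) / ((n:ℝ)+1) ≤ 1 := by
    have : (∑ k, m k) = ∑ k, l k := by
      rw [hm]
      rw [Finset.sum_add_distrib, ← Finset.mul_sum, hδsum]
      ring
    rw [this]
    exact hsum
  set w : Fin (n+2) → ℝ := fun j => v j + t * η j with hw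
  have hwpos : ∀ i, 0 < w i := hvt
  have hBw : ∀ i, (Bmat n m).mulVec w i < σ * w i := by
    intro i
    have := hΦt i
    rw [hΦ] at this
    simp only at this
    rw [Bmat_eq_TriM]
    have hmk : (fun k => m k ^ (-(1/2) : ℝ)) = (fun k => (l k + t * δ k) ^ (-(1/2) : ℝ)) := rfl
    rw [hmk]
    linarith [this]
  have hne' : (Finset.univ : Finset (Fin (n+2))).Nonempty := Finset.univ_nonempty
  set κ := Finset.univ.sup' hne' (fun i => (Bmat n m).mulVec w i / w i) with hκ
  have hκlt : κ < σ := by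
    rw [hκ, Finset.sup'_lt_iff]
    intro i _
    rw [div_lt_iff₀ (hwpos i)]
    linarith [hBw i]
  have hratio_nonneg : 0 ≤ (Bmat n m).mulVec w 0 / w 0 := by
    apply div_nonneg _ (le_of_lt (hwpos 0))
    unfold Matrix.mulVec dotProduct
    apply Finset.sum_nonneg
    intro j _
    apply mul_nonneg _ (le_of_lt (hwpos j))
    rw [Bmat_eq_TriM]
    exact TriM_nonneg n _ (fun k => Real.rpow_nonneg (le_of_lt (hmpos k)) _) _ _
  have hκ0 : 0 ≤ κ := le_trans hratio_nonneg
    (Finset.le_sup' (fun i : Fin (n+2) => (Bmat n m).mulVec w i / w i)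
      (Finset.mem_univ (0 : Fin (n+2))))
  have hsub : ∀ i, (Bmat n m).mulVec w i ≤ κ * w i := by
    intro i
    have := Finset.le_sup' (fun i : Fin (n+2) => (Bmat n m).mulVec w i / w i)
      (Finset.mem_univ i)
    rw [← hκ] at this
    rw [div_le_iff₀ (hwpos i)] at this
    linarith
  have hle := sigmaB_le_of_subinvariant n m hmpos w hwpos κ hκ0 hsub
  have hge := hminim m ⟨hmpos, hmsum⟩
  linarith

end Stmt11Aux

namespace Stmt11Aux

lemma cube_eq (x y : ℝ) (hx : 0 ≤ x) (hy : 0 ≤ y) (h : x^3 = y^3) : x = y := by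
  rcases lt_trichotomy x y with hl | he | hg
  · exfalso; nlinarith [pow_lt_pow_left₀ hl hx (three_ne_zero)]
  · exact he
  · exfalso; nlinarith [pow_lt_pow_left₀ hg hy (three_ne_zero)]

end Stmt11Aux


namespace Stmt11Aux

/-- Discrete Wronskian comparison: two positive "bridges" of the same nonlinear
recurrence with the same length must have `w 1 ≥ u 1`. -/
lemma no_cross (N : ℕ) (hN : 2 ≤ N) (r : ℝ) (hr : 0 < r) (u w : ℕ → ℝ)
    (hu0 : u 0 = 0) (hw0 : w 0 = 0) (huN : u N = 0) (hwN : w N = 0)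
    (hupos : ∀ j, 1 ≤ j → j < N → 0 < u j)
    (hwpos : ∀ j, 1 ≤ j → j < N → 0 < w j)
    (hurec : ∀ j, j + 2 ≤ N → u j + u (j+2) = r * u (j+1) ^ 2)
    (hwrec : ∀ j, j + 2 ≤ N → w j + w (j+2) = r * w (j+1) ^ 2)
    (hlt : w 1 < u 1) : False := by
  set W : ℕ → ℝ := fun j => u j * w (j+1) - u (j+1) * w j with hW
  have key : ∀ k, k + 2 ≤ N → (w (k+1) < u (k+1) ∧ W (k+1) < 0) := by
    intro k
    induction k with
    | zero =>
      intro h2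
      refine ⟨hlt, ?_⟩
      have h1 := hurec 0 h2
      have h2' := hwrec 0 h2
      have hu1 : 0 < u 1 := hupos 1 le_rfl (by omega)
      have hw1 : 0 < w 1 := hwpos 1 le_rfl (by omega)
      have : W 1 = r * u 1 * w 1 * (w 1 - u 1) := by
        simp only [hW]
        nlinarith [h1, h2']
      rw [this]
      have hneg : w 1 - u 1 < 0 := by linarith
      exact mul_neg_of_pos_of_neg (by positivity) hneg
    | succ k ih =>
      intro h2
      obtain ⟨hwu, hWneg⟩ := ih (by omega)
      have hu2 : 0 < u (k+2) := hupos (k+2) (by omega) (by omega)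
      have hw2 : 0 < w (k+2) := hwpos (k+2) (by omega) (by omega)
      have hu1 : 0 < u (k+1) := hupos (k+1) (by omega) (by omega)
      have hw1 : 0 < w (k+1) := hwpos (k+1) (by omega) (by omega)
      -- from W (k+1) < 0 : u(k+1) w(k+2) < u(k+2) w(k+1)
      have hlt2 : w (k+2) < u (k+2) := by
        have h1 : u (k+1) * w (k+2) < u (k+2) * w (k+1) := by
          have := hWneg
          simp only [hW] at this
          linarith
        nlinarith
      refine ⟨hlt2, ?_⟩
      have hstep : W (k+2) = W (k+1) + r * u (k+2) * w (k+2) * (w (k+2) - u (k+2)) := by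
        have h1 := hurec (k+1) (by omega)
        have h2' := hwrec (k+1) (by omega)
        simp only [hW]
        nlinarith [h1, h2']
      rw [hstep]
      have hneg : w (k+2) - u (k+2) < 0 := by linarith
      have := mul_neg_of_pos_of_neg (show (0:ℝ) < r * u (k+2) * w (k+2) by positivity) hneg
      linarith
  obtain ⟨M, rfl⟩ : ∃ M, N = M + 2 := ⟨N - 2, by omega⟩
  have := (key M le_rfl).2
  have hz : W (M+1) = 0 := by
    simp only [hW]
    rw [show M + 1 + 1 = M + 2 from rfl, huN, hwN]
    ring
  rw [hz] at this
  exact lt_irrefl _ this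

end Stmt11Aux

namespace Stmt11Aux

lemma upper_bound (N : ℕ) (hN : 4 ≤ N) (r : ℝ) (hr : 0 < r) (A : ℕ → ℝ)
    (h0 : A 0 = 0) (hNz : A N = 0)
    (hpos : ∀ j, 1 ≤ j → j < N → 0 < A j)
    (hrec : ∀ j, j + 2 ≤ N → A j + A (j+2) = r * A (j+1)^2) :
    ∀ j, j ≤ N → A j < 2 / r := by
  classical
  set P : ℕ → Prop := fun k => k ≤ N ∧ ∀ j ≤ N, A j ≤ A k with hP
  have hexP : ∃ k, P k := by
    obtain ⟨b, hb, hmax⟩ := Finset.exists_max_image (Finset.range (N+1)) A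
      ⟨0, Finset.mem_range.mpr (by omega)⟩
    have hbN : b ≤ N := by have := Finset.mem_range.mp hb; omega
    exact ⟨b, hbN, fun j hj => hmax j (Finset.mem_range.mpr (by omega))⟩
  obtain ⟨k, hkspec, hkmin⟩ : ∃ k, P k ∧ ∀ m, m < k → ¬ P m :=
    ⟨Nat.find hexP, Nat.find_spec hexP, fun m hm => Nat.find_min hexP hm⟩
  obtain ⟨hkN, hkmax⟩ := hkspec
  have hA1 : 0 < A 1 := hpos 1 le_rfl (by omega)
  have hk1 : 1 ≤ k := by
    by_contra h
    have hk0 : k = 0 := by omega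
    have := hkmax 1 (by omega)
    rw [hk0, h0] at this
    linarith
  have hkne : k ≠ N := by
    intro h
    have := hkmax 1 (by omega)
    rw [h, hNz] at this
    linarith
  have hkltN : k < N := lt_of_le_of_ne hkN hkne
  -- strict at k-1 : A (k-1) < A k
  obtain ⟨p, rfl⟩ : ∃ p, k = p + 1 := ⟨k - 1, by omega⟩

  have hstrict : A p < A (p+1) := by
    rcases lt_or_eq_of_le (hkmax p (by omega)) with h | h
    · exact h
    · exfalso
      have hPp : P p := ⟨by omega, fun j hj => by rw [h]; exact hkmax j hj⟩
      exact hkmin p (by omega) hPp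
  have hrk := hrec p (by omega)
  have hApos : 0 < A (p+1) := hpos (p+1) (by omega) (by omega)
  have hnext : A (p+2) ≤ A (p+1) := hkmax (p+2) (by omega)
  have hbound : A (p+1) < 2 / r := by
    rw [lt_div_iff₀ hr]
    nlinarith
  intro j hj
  exact lt_of_le_of_lt (hkmax j hj) hbound

lemma symm_seq (N : ℕ) (hN : 4 ≤ N) (r : ℝ) (hr : 0 < r) (A : ℕ → ℝ)
    (h0 : A 0 = 0) (hNz : A N = 0)
    (hpos : ∀ j, 1 ≤ j → j < N → 0 < A j)
    (hrec : ∀ j, j + 2 ≤ N → A j + A (j+2) = r * A (j+1)^2) :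
    ∀ j, j ≤ N → A j = A (N - j) := by
  set w : ℕ → ℝ := fun j => A (N - j) with hw
  have hw0 : w 0 = A N := by simp [hw]
  have hwN : w N = A 0 := by simp [hw]
  have hwpos : ∀ j, 1 ≤ j → j < N → 0 < w j := by
    intro j h1 h2
    exact hpos (N - j) (by omega) (by omega)
  have hwrec : ∀ j, j + 2 ≤ N → w j + w (j+2) = r * w (j+1) ^ 2 := by
    intro j hj
    obtain ⟨m, hm⟩ : ∃ m, j + 2 + m = N := ⟨N - (j+2), by omega⟩
    have e1 : N - j = m + 2 := by omega
    have e2 : N - (j+1) = m + 1 := by omega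
    have e3 : N - (j+2) = m := by omega
    simp only [hw, e1, e2, e3]
    have := hrec m (by omega)
    linarith
  -- A 1 = A (N-1)
  have h1eq : A 1 = A (N - 1) := by
    rcases lt_trichotomy (A (N-1)) (A 1) with h | h | h
    · exfalso
      exact no_cross N (by omega) r hr A w h0 (by rw [hw0, hNz]) hNz
          (by rw [hwN, h0]) hpos hwpos hrec hwrec (by
            show w 1 < A 1
            simpa [hw] using h)
    · exact h.symm
    · exfalso
      exact no_cross N (by omega) r hr w A (by rw [hw0, hNz]) h0 (by rw [hwN, h0]) hNz
        hwpos hpos hwrec hrec (by simpa [hw] using h)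
  -- full symmetry by two-step induction
  have main : ∀ j, j ≤ N → A j = w j := by
    intro j
    induction j using Nat.strong_induction_on with
    | _ j ih =>
      match j with
      | 0 => intro _; rw [h0, hw0, hNz]
      | 1 => intro _; simpa [hw] using h1eq
      | (m+2) =>
        intro hj
        have i1 := ih m (by omega) (by omega)
        have i2 := ih (m+1) (by omega) (by omega)
        have r1 := hrec m (by omega)
        have r2 := hwrec m (by omega)
        rw [i1, i2] at r1
        linarith
  intro j hj
  exact main j hj

end Stmt11Aux

namespace Stmt11Aux

lemma seq_main (N : ℕ) (hN : 4 ≤ N) (r : ℝ) (hr : 0 < r) (A : ℕ → ℝ)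
    (h0 : A 0 = 0) (h1 : A 1 = 1) (hNz : A N = 0)
    (hpos : ∀ j, 1 ≤ j → j < N → 0 < A j)
    (hrec : ∀ j, j + 2 ≤ N → A j + A (j+2) = r * A (j+1)^2) :
    (∀ i, i < N/2 → A i < A (i+1)) ∧ A (N/2) < 2/r ∧
      r < Real.sqrt 2 ∧ Real.sqrt 2 < 2/r := by
  have hup := upper_bound N hN r hr A h0 hNz hpos hrec
  have hsym := symm_seq N hN r hr A h0 hNz hpos hrec
  -- difference sequence
  set b : ℕ → ℝ := fun j => A (j+1) - A j with hb
  have hconc : ∀ j, 1 ≤ j → j + 1 ≤ N → b j < b (j-1) := by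
    intro j h1j h2j
    obtain ⟨m, rfl⟩ : ∃ m, j = m + 1 := ⟨j - 1, by omega⟩
    have hrecm := hrec m (by omega)
    have hAp : 0 < A (m+1) := hpos (m+1) (by omega) (by omega)
    have hAu : A (m+1) < 2 / r := hup (m+1) (by omega)
    simp only [hb, Nat.add_sub_cancel]
    have : r * A (m+1) ^ 2 < 2 * A (m+1) := by
      have := (lt_div_iff₀ hr).mp hAu
      nlinarith
    nlinarith
  have hanti : ∀ p q, p < q → q + 1 ≤ N → b q < b p := by
    intro p q hpq
    induction q with
    | zero => omega
    | succ m ih =>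
      intro hm
      have hstep : b (m+1) < b m := by
        have := hconc (m+1) (by omega) (by omega)
        simpa using this
      rcases Nat.lt_or_ge p m with h | h
      · exact lt_trans hstep (ih h (by omega))
      · have : p = m := by omega
        rw [this]; exact hstep
  have hmono : ∀ i, i < N/2 → A i < A (i+1) := by
    intro i hi
    have hiN : i + 1 ≤ N := by omega
    have hrev : b (N - 1 - i) = - b i := by
      simp only [hb]
      have e1 : N - 1 - i + 1 = N - i := by omega
      rw [e1]
      have s1 : A (N - i) = A i := (hsym i (by omega)).symm
      have s2 : A (N - 1 - i) = A (i+1) := by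
        have h' := hsym (i+1) (by omega)
        rw [h']
        congr 1
        omega
      rw [s1, s2]; ring
    have hlt : b (N - 1 - i) < b i := by
      apply hanti i (N - 1 - i) (by omega) (by omega)
    rw [hrev] at hlt
    have : 0 < b i := by linarith
    simpa [hb] using this
  have hmid : A (N/2) < 2/r := hup (N/2) (by omega)
  have hA2 : A 2 = r := by
    have := hrec 0 (by omega)
    rw [h0, h1] at this
    norm_num at this
    linarith
  have hrlt : r < 2 / r := by
    have := hup 2 (by omega)
    rw [hA2] at this
    exact this
  have hr2 : r^2 < 2 := by
    rw [lt_div_iff₀ hr] at hrlt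
    nlinarith
  have hrsqrt : r < Real.sqrt 2 := by
    rw [show r < Real.sqrt 2 ↔ r ^ 2 < 2 from Real.lt_sqrt (le_of_lt hr)]
    exact hr2
  have hq : Real.sqrt 2 < 2 / r := by
    rw [lt_div_iff₀ hr]
    nlinarith [Real.sq_sqrt (show (0:ℝ) ≤ 2 by norm_num), Real.sqrt_pos.mpr (show (0:ℝ) < 2 by norm_num), Real.sqrt_nonneg 2]
  exact ⟨hmono, hmid, hrsqrt, hq⟩

end Stmt11Aux


open Stmt11Aux in
/-- strict monotonicity of the `ā_i` up to the middle, the bound by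
`q̄ = 2/r̄`, and the bounds `r̄ < √2 < q̄`. -/
theorem stmt_11 (n : ℕ) (hn : 1 ≤ n) (l : Fin (n+1) → ℝ)
    (hmin : IsMinimizer n l) (v : Fin (n+2) → ℝ) (hv : IsPerronVector n l v)
    (a : ℕ → ℝ) (ha0 : a 0 = 0)
    (ha : ∀ j : Fin (n+2), a ((j : ℕ) + 1) = (v j / v 0) ^ ((2:ℝ)/3))
    (r q : ℝ) (hr : r = sigmaB n l ^ ((2:ℝ)/3) * l 0 ^ ((1:ℝ)/3))
    (hq : q = 2 / r) :
    (∀ i : ℕ, i < (n+3)/2 → a i < a (i+1)) ∧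
    a ((n+3)/2) < q ∧ r < Real.sqrt 2 ∧ Real.sqrt 2 < q := by
  obtain ⟨⟨hl, hsum⟩, hminim⟩ := hmin
  obtain ⟨hvpos, hvnorm, hveig⟩ := hv
  set σ := sigmaB n l with hσ
  -- padded sequences
  set VV : ℕ → ℝ := pad (n+2) v with hVV
  set GG : ℕ → ℝ := pad (n+1) (fun k => l k ^ (-(1/2) : ℝ)) with hGG
  set LL : ℕ → ℝ := pad (n+1) l with hLL
  have hVVpos : ∀ i, i < n + 2 → 0 < VV i := by
    intro i hi; rw [hVV, pad_lt _ _ _ hi]; exact hvpos _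
  have hVVnn : ∀ i, 0 ≤ VV i := by
    intro i
    rcases Nat.lt_or_ge i (n+2) with h | h
    · exact (hVVpos i h).le
    · rw [hVV, pad_ge _ _ _ h]
  have hLLpos : ∀ i, i ≤ n → 0 < LL i := by
    intro i hi; rw [hLL, pad_lt _ _ _ (by omega)]; exact hl _
  have hrows := rows_of_eig n (fun k => l k ^ (-(1/2) : ℝ)) v σ (by rw [← Bmat_eq_TriM]; exact hveig)
  obtain ⟨hrow0, hrow⟩ := hrows
  rw [← hGG, ← hVV] at hrow0 hrow
  have hGG0 : ∀ i, i ≤ n → GG i = LL i ^ (-(1/2) : ℝ) := by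
    intro i hi
    rw [hGG, hLL, pad_lt _ _ _ (by omega : i < n+1), pad_lt _ _ _ (by omega : i < n+1)]
  have hσpos : 0 < σ := by
    have h1 : 0 < GG 0 := by
      rw [hGG0 0 (by omega)]
      exact Real.rpow_pos_of_pos (hLLpos 0 (by omega)) _
    have h2 : 0 < VV 1 := hVVpos 1 (by omega)
    have h0 : 0 < VV 0 := hVVpos 0 (by omega)
    nlinarith [hrow0]
  -- KKT
  have hkkt := kkt n l hl hminim hsum v hvpos hvnorm hveig
  set K : ℝ := l 0 ^ (-(3:ℝ)/2) * (v (0 : Fin (n+1)).castSucc * v (0 : Fin (n+1)).succ) with hK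
  have hKpos : 0 < K := by
    rw [hK]
    have := Real.rpow_pos_of_pos (hl 0) (-(3:ℝ)/2)
    have := hvpos (0 : Fin (n+1)).castSucc
    have := hvpos (0 : Fin (n+1)).succ
    positivity
  have hwgtK : ∀ i : ℕ, i ≤ n → LL i ^ (-(3:ℝ)/2) * (VV i * VV (i+1)) = K := by
    intro i hi
    have hp : (i : ℕ) < n + 1 := by omega
    have := hkkt ⟨i, hp⟩ 0
    rw [hK]
    rw [← this]
    rw [hLL, pad_lt _ _ _ hp, hVV, pad_lt _ _ _ (by omega : i < n+2),
      pad_lt _ _ _ (by omega : i+1 < n+2)]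
    congr 1
  -- KKT in multiplicative form
  have hVVK : ∀ i : ℕ, i ≤ n → VV i * VV (i+1) = K * LL i ^ ((3:ℝ)/2) := by
    intro i hi
    have h := hwgtK i hi
    have hLl := hLLpos i hi
    have hmul : LL i ^ (-(3:ℝ)/2) * LL i ^ ((3:ℝ)/2) = 1 := by
      rw [← Real.rpow_add hLl]
      norm_num
    linear_combination LL i ^ ((3:ℝ)/2) * h - (VV i * VV (i+1)) * hmul
  set α : ℕ → ℝ := fun m => VV m ^ ((2:ℝ)/3) with hα
  have hαnn : ∀ m, 0 ≤ α m := fun m => Real.rpow_nonneg (hVVnn m) _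
  have hαpos : ∀ m, m < n+2 → 0 < α m := fun m hm => Real.rpow_pos_of_pos (hVVpos m hm) _
  have hVVlast : VV (n+2) = 0 := by rw [hVV]; exact pad_ge _ _ _ (le_refl _)
  have hαlast : α (n+2) = 0 := by
    rw [hα]; simp only; rw [hVVlast, Real.zero_rpow (by norm_num : ((2:ℝ)/3) ≠ 0)]
  have hcubeα : ∀ m, α m ^ 3 = VV m ^ 2 := by
    intro m
    rw [hα]
    simp only
    rw [← Real.rpow_natCast (VV m ^ ((2:ℝ)/3)) 3, ← Real.rpow_mul (hVVnn m)]
    rw [show ((2:ℝ)/3) * ((3:ℕ):ℝ) = ((2:ℕ):ℝ) by norm_num]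
    rw [Real.rpow_natCast]
  have hG2 : ∀ i : ℕ, i ≤ n+1 → α i * α (i+1) = K ^ ((2:ℝ)/3) * LL i := by
    intro i hi
    rcases Nat.lt_or_ge i (n+1) with h | h
    · have hi' : i ≤ n := by omega
      have hLl := hLLpos i hi'
      have := congrArg (fun x : ℝ => x ^ ((2:ℝ)/3)) (hVVK i hi')
      rw [Real.mul_rpow (hVVnn i) (hVVnn (i+1)),
        Real.mul_rpow hKpos.le (Real.rpow_nonneg hLl.le _),
        ← Real.rpow_mul hLl.le] at this
      rw [show ((3:ℝ)/2) * ((2:ℝ)/3) = 1 by norm_num, Real.rpow_one] at this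
      rw [hα]
      exact this
    · have hieq : i = n + 1 := by omega
      rw [hieq, hαlast, mul_zero]
      rw [show LL (n+1) = 0 from by rw [hLL]; exact pad_ge _ _ _ (le_refl _)]
      ring
  have hG1 : ∀ i : ℕ, i ≤ n+1 → GG i * (VV i * VV (i+1)) = K * LL i := by
    intro i hi
    rcases Nat.lt_or_ge i (n+1) with h | h
    · have hi' : i ≤ n := by omega
      have hLl := hLLpos i hi'
      rw [hGG0 i hi', hVVK i hi']
      have hKK : LL i ^ (-(1/2):ℝ) * LL i ^ ((3:ℝ)/2) = LL i := by
        rw [← Real.rpow_add hLl]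
        norm_num
      linear_combination K * hKK
    · have hieq : i = n + 1 := by omega
      rw [hieq,
        show GG (n+1) = 0 from by rw [hGG]; exact pad_ge _ _ _ (le_refl _),
        show LL (n+1) = 0 from by rw [hLL]; exact pad_ge _ _ _ (le_refl _)]
      ring
  have hl0LL : LL 0 = l 0 := by
    rw [hLL, pad_lt _ _ _ (by omega : 0 < n+1)]
    exact congrArg l (Fin.ext rfl)
  have hKl0 : K * LL 0 = σ * VV 0 ^ 2 := by
    linear_combination VV 0 * hrow0 - hG1 0 (by omega)
  have hrcube : r ^ 3 = σ ^ 2 * l 0 := by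
    rw [hr, mul_pow]
    have e1 : (σ ^ ((2:ℝ)/3)) ^ 3 = σ ^ 2 := by
      rw [← Real.rpow_natCast (σ ^ ((2:ℝ)/3)) 3, ← Real.rpow_mul hσpos.le,
        show ((2:ℝ)/3) * ((3:ℕ):ℝ) = ((2:ℕ):ℝ) by norm_num, Real.rpow_natCast]
    have e2 : (l 0 ^ ((1:ℝ)/3)) ^ 3 = l 0 := by
      rw [← Real.rpow_natCast (l 0 ^ ((1:ℝ)/3)) 3, ← Real.rpow_mul (hl 0).le,
        show ((1:ℝ)/3) * ((3:ℕ):ℝ) = 1 by norm_num, Real.rpow_one]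
    rw [e1, e2]
  have hK13 : (K ^ ((1:ℝ)/3)) ^ 3 = K := by
    rw [← Real.rpow_natCast (K ^ ((1:ℝ)/3)) 3, ← Real.rpow_mul hKpos.le,
      show ((1:ℝ)/3) * ((3:ℕ):ℝ) = 1 by norm_num, Real.rpow_one]
  have hK13pos : 0 < K ^ ((1:ℝ)/3) := Real.rpow_pos_of_pos hKpos _
  have hrpos : 0 < r := by
    rw [hr]
    exact mul_pos (Real.rpow_pos_of_pos hσpos _) (Real.rpow_pos_of_pos (hl 0) _)
  have hkey : α 0 * σ = r * K ^ ((1:ℝ)/3) := by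
    apply cube_eq _ _ (mul_nonneg (hαnn 0) hσpos.le)
      (mul_nonneg hrpos.le hK13pos.le)
    rw [mul_pow, mul_pow, hcubeα 0, hK13, hrcube, ← hl0LL]
    linear_combination (-(σ^2)) * hKl0
  have hErec : ∀ j : ℕ, j ≤ n → σ * α (j+1)^2 = K ^ ((1:ℝ)/3) * (α j + α (j+2)) := by
    intro j hj
    have hE1 : σ * VV (j+1)^2 = K * (LL j + LL (j+1)) := by
      linear_combination (-(VV (j+1))) * hrow j + hG1 j (by omega) + hG1 (j+1) (by omega)
    have hKK : K ^ ((1:ℝ)/3) * K ^ ((2:ℝ)/3) = K := by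
      rw [← Real.rpow_add hKpos]
      norm_num
    have hKm : ∀ i : ℕ, i ≤ n+1 → K * LL i = K ^ ((1:ℝ)/3) * (α i * α (i+1)) := by
      intro i hi
      rw [hG2 i hi]
      linear_combination (-(LL i)) * hKK
    rw [mul_add, hKm j (by omega), hKm (j+1) (by omega)] at hE1
    have hα1 : 0 < α (j+1) := hαpos _ (by omega)
    apply mul_left_cancel₀ (ne_of_gt hα1)
    calc α (j+1) * (σ * α (j+1)^2) = σ * α (j+1)^3 := by ring
      _ = σ * VV (j+1)^2 := by rw [hcubeα]
      _ = K ^ ((1:ℝ)/3) * (α j * α (j+1)) + K ^ ((1:ℝ)/3) * (α (j+1) * α (j+2)) := hE1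
      _ = α (j+1) * (K ^ ((1:ℝ)/3) * (α j + α (j+2))) := by ring
  -- the sequence A
  set A : ℕ → ℝ := fun j => if j = 0 then 0 else (VV (j-1) / VV 0) ^ ((2:ℝ)/3) with hA
  have hVV0pos : 0 < VV 0 := hVVpos 0 (by omega)
  have hα0pos : 0 < α 0 := hαpos 0 (by omega)
  have hAdiv : ∀ j : ℕ, A (j+1) = α j / α 0 := by
    intro j
    rw [hA]
    simp only [Nat.add_sub_cancel, if_neg (Nat.succ_ne_zero j)]
    rw [Real.div_rpow (hVVnn j) hVV0pos.le]
  have hA0 : A 0 = 0 := by rw [hA]; simp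
  have hA1 : A 1 = 1 := by
    rw [hAdiv 0, div_self (ne_of_gt hα0pos)]
  have hAN : A (n+3) = 0 := by
    rw [show n+3 = (n+2)+1 from rfl, hAdiv (n+2), hαlast, zero_div]
  have hApos : ∀ j, 1 ≤ j → j < n+3 → 0 < A j := by
    intro j h1 h2
    obtain ⟨m, rfl⟩ : ∃ m, j = m + 1 := ⟨j - 1, by omega⟩
    rw [hAdiv m]
    exact div_pos (hαpos m (by omega)) hα0pos
  have hArec : ∀ j, j + 2 ≤ n+3 → A j + A (j+2) = r * A (j+1)^2 := by
    intro j hj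
    rcases Nat.eq_zero_or_pos j with rfl | hjpos
    · -- boundary case j = 0 : A 2 = r
      rw [hA0, hA1, hAdiv 1, zero_add]
      have hGGsq : GG 0 ^ 2 * l 0 = 1 := by
        rw [hGG0 0 (by omega), ← Real.rpow_natCast (LL 0 ^ (-(1/2):ℝ)) 2,
          ← Real.rpow_mul (hLLpos 0 (by omega)).le,
          show (-(1/2):ℝ) * ((2:ℕ):ℝ) = -1 by norm_num, hl0LL]
        rw [Real.rpow_neg_one]
        exact inv_mul_cancel₀ (ne_of_gt (hl 0))
      have hsq : (GG 0 * VV 1) ^ 2 = (σ * VV 0) ^ 2 := by rw [hrow0]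
      have hVV1sq : VV 1 ^ 2 = σ ^ 2 * l 0 * VV 0 ^ 2 := by
        have h2 : GG 0 ^2 * VV 1 ^2 = σ^2 * VV 0^2 := by
          linear_combination hsq
        linear_combination l 0 * h2 - VV 1 ^ 2 * hGGsq
      have : α 1 = r * α 0 := by
        apply cube_eq _ _ (hαnn 1) (mul_nonneg hrpos.le (hαnn 0))
        rw [mul_pow, hcubeα 1, hcubeα 0, hrcube, hVV1sq]
        try ring
      rw [this, one_pow, mul_one]
      exact mul_div_cancel_right₀ r (ne_of_gt hα0pos)
    · obtain ⟨m, rfl⟩ : ∃ m, j = m + 1 := ⟨j - 1, by omega⟩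
      have hm : m ≤ n := by omega
      have hE := hErec m hm
      rw [hAdiv m, hAdiv (m+2), hAdiv (m+1)]
      rw [← add_div, div_pow]
      have h0ne : α 0 ≠ 0 := ne_of_gt hα0pos
      field_simp
      apply mul_left_cancel₀ (ne_of_gt hK13pos)
      linear_combination (-(α 0)) * hE + (α (m+1)^2) * hkey
  -- link `a` with `A`
  have haA : ∀ j, j ≤ n+2 → a j = A j := by
    intro j hj
    rcases Nat.eq_zero_or_pos j with rfl | hjpos
    · rw [ha0, hA0]
    · obtain ⟨m, rfl⟩ : ∃ m, j = m + 1 := ⟨j - 1, by omega⟩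
      have hm2 : m < n + 2 := by omega
      have := ha ⟨m, hm2⟩
      simp only at this
      rw [this, hAdiv m, hα]
      simp only
      rw [hVV, pad_lt _ _ _ hm2, pad_lt _ _ _ (by omega : 0 < n+2)]
      rw [Real.div_rpow (hvpos _).le (hvpos _).le]
      rfl
  obtain ⟨hmono, hmid, hrs, hsq2⟩ :=
    seq_main (n+3) (by omega) r hrpos A hA0 hA1 hAN hApos hArec
  refine ⟨?_, ?_, hrs, ?_⟩
  · intro i hi
    have h1 : i ≤ n + 2 := by omega
    have h2 : i + 1 ≤ n + 2 := by omega
    rw [haA i h1, haA (i+1) h2]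
    exact hmono i hi
  · rw [haA ((n+3)/2) (by omega), hq]
    exact hmid
  · rw [hq]
    exact hsq2
end
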